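/- arXiv:1203.6736 — 9 statements merged into one kernel-verified Lean document; each statement's English description precedes it below -/
import Mathlib

section
/- The Eulerian polynomials of type B, defined by sum_{k≥0} (2k+1)^n t^k = B_n(t)/(1-t)^{n+1}, can be written as B_n(t) = sum_{k=0}^{⌊n/2⌋} b_{n,k} t^k (1+t)^{n-2k} with positive integers b_{n,k} satisfying b_{n,k} = (2k+1)b_{n-1,k} + 4(n+1-2k)b_{n-1,k-1}, with b_{1,0} = 1 and b_{n,k} = 0 for k < 0 or k > ⌊n/2⌋. -/
open Polynomial Finset

private def bb : ℕ → ℤ → ℤ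
  | 0, k => if k = 0 then 1 else 0
  | (n+1), k => if k < 0 then 0 else (2*k+1) * bb n k + 4*((n:ℤ)+2-2*k) * bb n (k-1)

private lemma bb_zero : ∀ n : ℕ, ∀ k : ℤ, (k < 0 ∨ ((n / 2 : ℕ) : ℤ) < k) → bb n k = 0 := by
  intro n
  induction n with
  | zero => intro k hk; simp [bb]; omega
  | succ n ih =>
    intro k hk
    rcases lt_or_ge k 0 with h | h
    · simp [bb, h]
    · have hk' : ((n+1) / 2 : ℕ) < k := by omega
      have h1 : bb n k = 0 := ih k (Or.inr (by push_cast; omega))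
      rcases lt_or_ge ((n / 2 : ℕ) : ℤ) (k-1) with h2 | h2
      · have h2' : bb n (k-1) = 0 := ih (k-1) (Or.inr h2)
        simp [bb, h1, h2', not_lt.mpr h]
      · have : (n:ℤ) + 2 - 2*k = 0 := by omega
        simp [bb, h1, this, not_lt.mpr h]

private lemma bb_pos : ∀ n : ℕ, ∀ k : ℤ, 0 ≤ k → k ≤ ((n / 2 : ℕ) : ℤ) → 0 < bb n k := by
  intro n
  induction n with
  | zero =>
    intro k h1 h2
    have : k = 0 := by omega
    simp [bb, this]
  | succ n ih =>
    intro k h1 h2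
    rcases lt_or_ge ((n / 2 : ℕ) : ℤ) k with h | h
    · have hk1 : k - 1 ≤ ((n / 2 : ℕ) : ℤ) := by omega
      have hk0 : (1:ℤ) ≤ k := by omega
      have hb1 : 0 < bb n (k-1) := ih (k-1) (by omega) hk1
      have hbk : bb n k = 0 := bb_zero n k (Or.inr h)
      have hc : 0 < (4:ℤ)*((n:ℤ)+2-2*k) := by omega
      simp only [bb, if_neg (not_lt.mpr h1), hbk, mul_zero, zero_add]
      exact mul_pos hc hb1
    · have hb : 0 < bb n k := ih k h1 h
      have hb2 : 0 ≤ bb n (k-1) := by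
        rcases lt_or_ge (k-1) 0 with h' | h'
        · exact le_of_eq (bb_zero n (k-1) (Or.inl h')).symm
        · exact le_of_lt (ih (k-1) h' (by omega))
      have hc : 0 ≤ (4:ℤ)*((n:ℤ)+2-2*k) := by omega
      have := mul_nonneg hc hb2
      have h2k : 0 < (2*k+1) * bb n k := by positivity
      simp only [bb, if_neg (not_lt.mpr h1)]
      omega

private lemma perterm (k m : ℕ) :
    (1 + C (4*(k:ℤ)+2*(m:ℤ)+1) * X) * (X^k * (1+X)^m)
      + C 2 * X * (1-X) * Polynomial.derivative (X^k * (1+X)^m)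
    = C (2*(k:ℤ)+1) * X^k * (1+X)^(m+1) + C (4*(m:ℤ)) * X^(k+1) * (1+X)^(m-1) := by
  rcases m with _ | m <;> rcases k with _ | k <;>
    simp [derivative_pow, derivative_mul, Nat.succ_sub_one] <;> ring

private noncomputable def QQ (n : ℕ) : Polynomial ℤ :=
  ∑ k ∈ Finset.range (n/2+1), C (bb n (k:ℤ)) * X^k * (1+X)^(n-2*k)

private lemma QQ_rec (n : ℕ) :
    QQ (n+1) = (1 + C (2*(n:ℤ)+1) * X) * QQ n
      + C 2 * X * (1-X) * Polynomial.derivative (QQ n) := by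
  have key : (1 + C (2*(n:ℤ)+1) * X) * QQ n + C 2 * X * (1-X) * Polynomial.derivative (QQ n)
      = ∑ k ∈ range (n/2+1),
          (C ((2*(k:ℤ)+1) * bb n (k:ℤ)) * X^k * (1+X)^(n-2*k+1)
            + C (4*((n:ℤ)-2*k) * bb n (k:ℤ)) * X^(k+1) * (1+X)^(n-2*k-1)) := by
    rw [QQ, derivative_sum, Finset.mul_sum, Finset.mul_sum, ← Finset.sum_add_distrib]
    refine Finset.sum_congr rfl fun k hk => ?_
    have hk' : 2*k ≤ n := by
      have := Finset.mem_range.mp hk; omega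
    obtain ⟨m, hm⟩ : ∃ m, n - 2*k = m := ⟨_, rfl⟩
    rw [hm]
    rw [show (2*(n:ℤ)+1) = 4*(k:ℤ)+2*(m:ℤ)+1 by omega,
        show (4*((n:ℤ)-2*(k:ℤ))) = 4*(m:ℤ) by omega]
    have := perterm k m
    calc (1 + C (4*(k:ℤ)+2*(m:ℤ)+1) * X) * (C (bb n (k:ℤ)) * X^k * (1+X)^m)
          + C 2 * X * (1-X) * Polynomial.derivative (C (bb n (k:ℤ)) * X^k * (1+X)^m)
        = C (bb n (k:ℤ)) * ((1 + C (4*(k:ℤ)+2*(m:ℤ)+1) * X) * (X^k * (1+X)^m)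
            + C 2 * X * (1-X) * Polynomial.derivative (X^k * (1+X)^m)) := by
          simp only [mul_assoc, derivative_C_mul]
          ring
      _ = C (bb n (k:ℤ)) * (C (2*(k:ℤ)+1) * X^k * (1+X)^(m+1)
            + C (4*(m:ℤ)) * X^(k+1) * (1+X)^(m-1)) := by rw [this]
      _ = _ := by simp only [C_mul]; ring
  rw [key]
  have hpad : QQ (n+1) = ∑ j ∈ range (n/2+2),
      C (bb (n+1) (j:ℤ)) * X^j * (1+X)^(n+1-2*j) := by
    rw [QQ]
    refine Finset.sum_subset (fun x hx => by simp only [mem_range] at *; omega) ?_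
    intro x _ hx
    simp only [mem_range, not_lt] at hx
    have : bb (n+1) (x:ℤ) = 0 := bb_zero (n+1) x (Or.inr (by push_cast; omega))
    simp [this]
  have hsplit : ∀ j ∈ range (n/2+2),
      C (bb (n+1) (j:ℤ)) * X^j * (1+X)^(n+1-2*j)
      = C ((2*(j:ℤ)+1) * bb n (j:ℤ)) * X^j * (1+X)^(n+1-2*j)
        + C (4*((n:ℤ)+2-2*(j:ℤ)) * bb n ((j:ℤ)-1)) * X^j * (1+X)^(n+1-2*j) := by
    intro j _
    have h0 : ¬ ((j:ℤ) < 0) := by exact not_lt.mpr (Int.natCast_nonneg j)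
    rw [show bb (n+1) (j:ℤ) = (2*(j:ℤ)+1) * bb n (j:ℤ)
          + 4*((n:ℤ)+2-2*(j:ℤ)) * bb n ((j:ℤ)-1) by simp [bb, h0]]
    rw [C_add, add_mul, add_mul]
  have e1 : (∑ j ∈ range (n/2+2), C ((2*(j:ℤ)+1) * bb n (j:ℤ)) * X^j * (1+X)^(n+1-2*j))
      = ∑ k ∈ range (n/2+1), C ((2*(k:ℤ)+1) * bb n (k:ℤ)) * X^k * (1+X)^(n-2*k+1) := by
    rw [Finset.sum_range_succ]
    have htop : bb n ((n/2+1 : ℕ) : ℤ) = 0 := bb_zero n _ (Or.inr (by push_cast; omega))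
    rw [htop]
    simp only [mul_zero, map_zero, zero_mul, add_zero]
    refine Finset.sum_congr rfl fun k hk => ?_
    have hk' : 2*k ≤ n := by have := Finset.mem_range.mp hk; omega
    rw [show n+1-2*k = n-2*k+1 by omega]
  have e2 : (∑ j ∈ range (n/2+2), C (4*((n:ℤ)+2-2*(j:ℤ)) * bb n ((j:ℤ)-1)) * X^j * (1+X)^(n+1-2*j))
      = ∑ k ∈ range (n/2+1), C (4*((n:ℤ)-2*(k:ℤ)) * bb n (k:ℤ)) * X^(k+1) * (1+X)^(n-2*k-1) := by
    rw [Finset.sum_range_succ']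
    have hbot : bb n (((0:ℕ):ℤ)-1) = 0 := bb_zero n _ (Or.inl (by norm_num))
    rw [hbot]
    simp only [mul_zero, map_zero, zero_mul, add_zero]
    refine Finset.sum_congr rfl fun k hk => ?_
    have hk' : 2*k ≤ n := by have := Finset.mem_range.mp hk; omega
    have c1 : (4*((n:ℤ)+2-2*(((k+1:ℕ)):ℤ))) = 4*((n:ℤ)-2*(k:ℤ)) := by push_cast; ring
    have c2 : (((k+1:ℕ)):ℤ)-1 = (k:ℤ) := by push_cast; ring
    have c3 : n+1-2*(k+1) = n-2*k-1 := by omega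
    rw [c1, c2, c3]
  rw [hpad, Finset.sum_congr rfl hsplit, Finset.sum_add_distrib, e1, e2,
      ← Finset.sum_add_distrib]

private noncomputable def SS (n : ℕ) : PowerSeries ℤ :=
  PowerSeries.mk (fun k => (2*(k:ℤ)+1)^n)

private lemma SS_succ (n : ℕ) :
    SS (n+1) = SS n + 2 * PowerSeries.X * PowerSeries.derivative ℤ (SS n) := by
  ext k
  rcases k with _ | k
  · simp [SS, PowerSeries.coeff_zero_eq_constantCoeff, mul_assoc]
  · rw [map_add]
    rw [show (2 : PowerSeries ℤ) * PowerSeries.X * PowerSeries.derivative ℤ (SS n)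
        = PowerSeries.X * (2 * PowerSeries.derivative ℤ (SS n)) by ring]
    rw [PowerSeries.coeff_succ_X_mul]
    simp only [SS, PowerSeries.coeff_mk]
    rw [show ((2:PowerSeries ℤ) * PowerSeries.derivative ℤ (PowerSeries.mk fun k => (2*(k:ℤ)+1)^n))
        = PowerSeries.C (R := ℤ) 2 * PowerSeries.derivative ℤ (PowerSeries.mk fun k => (2*(k:ℤ)+1)^n) by
      simp [PowerSeries.C_eq_algebraMap]]
    rw [PowerSeries.coeff_C_mul, PowerSeries.coeff_derivative, PowerSeries.coeff_mk]
    push_cast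
    ring

private lemma SS_zero_mul : SS 0 * (1 - PowerSeries.X) = 1 := by
  ext k
  rw [mul_sub, mul_one, map_sub]
  rcases k with _ | k
  · simp [SS, PowerSeries.coeff_zero_eq_constantCoeff]
  · rw [show SS 0 * PowerSeries.X = PowerSeries.X * SS 0 by ring,
      PowerSeries.coeff_succ_X_mul]
    simp [SS]

private lemma QQ_ps : ∀ n : ℕ, ((QQ n : Polynomial ℤ) : PowerSeries ℤ)
    = SS n * (1 - PowerSeries.X) ^ (n+1) := by
  intro n
  induction n with
  | zero =>
    have h1 : QQ 0 = 1 := by simp [QQ, bb]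
    rw [h1, Polynomial.coe_one, pow_one, SS_zero_mul]
  | succ n ih =>
    have hd : ((Polynomial.derivative (QQ n) : Polynomial ℤ) : PowerSeries ℤ)
        = PowerSeries.derivative ℤ (SS n) * (1 - PowerSeries.X)^(n+1)
          - ((n:PowerSeries ℤ) + 1) * (SS n * (1 - PowerSeries.X)^n) := by
      rw [← PowerSeries.derivative_coe, ih]
      rw [Derivation.leibniz, Derivation.leibniz_pow]
      have hdx : PowerSeries.derivative ℤ (1 - PowerSeries.X : PowerSeries ℤ) = -1 := by
        rw [map_sub]; simp
      rw [hdx]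
      simp only [smul_eq_mul, nsmul_eq_mul, Nat.add_sub_cancel]
      push_cast
      ring
    rw [QQ_rec]
    push_cast [Polynomial.coe_add, Polynomial.coe_mul, Polynomial.coe_one,
      Polynomial.coe_X, Polynomial.coe_C, ih, hd, SS_succ]
    have hC : (PowerSeries.C (R := ℤ)) (2*(n:ℤ)+1) = 2*((n:ℕ):PowerSeries ℤ)+1 := by
      rw [map_add, map_mul, map_one]
      norm_num
    have hC2 : (PowerSeries.C (R := ℤ)) (2:ℤ) = 2 := by norm_num
    rw [hC, hC2]
    ring

/-- The type B Eulerian polynomials, defined by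
`∑_{k≥0} (2k+1)^n t^k = B_n(t)/(1-t)^{n+1}`, can be written as
`B_n(t) = ∑_{k=0}^{⌊n/2⌋} b_{n,k} t^k (1+t)^{n-2k}` with positive integers `b_{n,k}`
satisfying `b_{n,k} = (2k+1) b_{n-1,k} + 4(n+1-2k) b_{n-1,k-1}`, with `b_{1,0} = 1`
and `b_{n,k} = 0` for `k < 0` or `k > ⌊n/2⌋`. -/
theorem eulerianB_gamma_expansion (B : ℕ → Polynomial ℤ)
    (hB : ∀ n, ((B n : PowerSeries ℤ) =
      PowerSeries.mk (fun k => (2 * (k : ℤ) + 1) ^ n) * (1 - PowerSeries.X) ^ (n + 1))) :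
    ∃ b : ℕ → ℤ → ℤ,
      b 1 0 = 1 ∧
      (∀ n : ℕ, ∀ k : ℤ, 1 ≤ n → (k < 0 ∨ ((n / 2 : ℕ) : ℤ) < k) → b n k = 0) ∧
      (∀ n : ℕ, ∀ k : ℤ, 1 ≤ n → 0 ≤ k → k ≤ ((n / 2 : ℕ) : ℤ) → 0 < b n k) ∧
      (∀ n : ℕ, ∀ k : ℤ, 2 ≤ n → 0 ≤ k → k ≤ ((n / 2 : ℕ) : ℤ) →
        b n k = (2 * k + 1) * b (n - 1) k + 4 * ((n : ℤ) + 1 - 2 * k) * b (n - 1) (k - 1)) ∧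
      (∀ n : ℕ, 1 ≤ n → B n = ∑ k ∈ Finset.range (n / 2 + 1),
        Polynomial.C (b n (k : ℤ)) * Polynomial.X ^ k * (1 + Polynomial.X) ^ (n - 2 * k)) := by
  refine ⟨bb, ?_, ?_, ?_, ?_, ?_⟩
  · norm_num [bb]
  · intro n k _ hk; exact bb_zero n k hk
  · intro n k _ h1 h2; exact bb_pos n k h1 h2
  · intro n k hn h0 _
    obtain ⟨m, rfl⟩ : ∃ m, n = m + 1 := ⟨n - 1, by omega⟩
    have h0' : ¬ (k < 0) := not_lt.mpr h0
    simp only [bb, if_neg h0', Nat.add_sub_cancel]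
    push_cast
    ring_nf
  · intro n _
    have hcoe : ((B n : Polynomial ℤ) : PowerSeries ℤ) = ((QQ n : Polynomial ℤ) : PowerSeries ℤ) := by
      rw [hB n, QQ_ps n, SS]
    exact Polynomial.coe_inj.mp hcoe
end

section
/- Carlitz's q-Eulerian coefficients A_{n,k}(q) satisfy the recurrence A_{n,k}(q) = [k]_q A_{n-1,k}(q) + q^{k-1}[n+1-k]_q A_{n-1,k-1}(q) for 1 ≤ k ≤ n. -/
/-- The `q`-integer `[m]_q = 1 + q + ⋯ + q^{m-1}` as a polynomial in `q`. -/
noncomputable def qint (m : ℕ) : Polynomial ℤ := ∑ i ∈ Finset.range m, Polynomial.X ^ i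

open PowerSeries

private abbrev R := Polynomial ℤ

private lemma one_sub_X_mul_qint (m : ℕ) :
    (1 - Polynomial.X) * qint m = 1 - Polynomial.X ^ m := by
  unfold qint
  linear_combination -(geom_sum_mul (Polynomial.X : Polynomial ℤ) m)

private lemma rescale_C' (a c : R) : rescale a (C (R := R) c) = C (R := R) c := by
  refine PowerSeries.ext fun n => ?_
  rw [coeff_rescale, coeff_C]
  split_ifs with h <;> simp [h]

private lemma key (A : ℕ → Polynomial R)
    (hA : ∀ n, ((A n : PowerSeries R) =
      PowerSeries.mk (fun j => (qint (j + 1)) ^ n) *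
        ∏ i ∈ Finset.range (n + 1),
          (1 - PowerSeries.C (R := R) (Polynomial.X ^ i) * PowerSeries.X)))
    (n : ℕ) :
    C (R := R) (1 - Polynomial.X) * (A (n+1) : PowerSeries R) =
      (1 - C (R := R) (Polynomial.X ^ (n+1)) * X) * (A n : PowerSeries R)
      - C (R := R) Polynomial.X * (1 - X) * rescale Polynomial.X (A n : PowerSeries R) := by
  set q : R := Polynomial.X with hq
  have hmk : C (R := R) (1 - q) * PowerSeries.mk (fun j => (qint (j + 1)) ^ (n+1)) =
      PowerSeries.mk (fun j => (qint (j + 1)) ^ n)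
      - C (R := R) q * PowerSeries.mk (fun j => q ^ j * (qint (j + 1)) ^ n) := by
    refine PowerSeries.ext fun m => ?_
    simp only [coeff_C_mul, LinearMap.map_sub, coeff_mk]
    have h1 : (1 - q) * qint (m+1) = 1 - q ^ (m+1) := one_sub_X_mul_qint (m+1)
    calc (1 - q) * qint (m + 1) ^ (n + 1)
        = ((1 - q) * qint (m+1)) * qint (m+1) ^ n := by ring
      _ = (1 - q ^ (m+1)) * qint (m+1) ^ n := by rw [h1]
      _ = qint (m + 1) ^ n - q * (q ^ m * qint (m + 1) ^ n) := by ring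
  have hresc : rescale q (A n : PowerSeries R) =
      PowerSeries.mk (fun j => q ^ j * (qint (j + 1)) ^ n) *
        ∏ i ∈ Finset.range (n + 1), (1 - C (R := R) (q ^ (i+1)) * X) := by
    rw [hA n, map_mul, rescale_mk, map_prod]
    congr 1
    apply Finset.prod_congr rfl
    intro i _
    rw [map_sub, map_one, map_mul, rescale_C', rescale_X]
    rw [← mul_assoc, ← map_mul, pow_succ]
  have hprod : ∏ i ∈ Finset.range (n + 2), (1 - C (R := R) (q ^ i) * X) =
      (1 - C (R := R) (q ^ 0) * X) * ∏ i ∈ Finset.range (n + 1), (1 - C (R := R) (q ^ (i+1)) * X) := by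
    rw [Finset.prod_range_succ' (fun i => (1 - C (R := R) (q ^ i) * X)) (n+1), mul_comm]
  have hprod2 : ∏ i ∈ Finset.range (n + 2), (1 - C (R := R) (q ^ i) * X) =
      (∏ i ∈ Finset.range (n + 1), (1 - C (R := R) (q ^ i) * X)) * (1 - C (R := R) (q ^ (n+1)) * X) :=
    Finset.prod_range_succ _ _
  rw [hA (n+1)]
  calc C (R := R) (1 - q) * (PowerSeries.mk (fun j => (qint (j + 1)) ^ (n+1)) *
        ∏ i ∈ Finset.range (n + 2), (1 - C (R := R) (q ^ i) * X))
      = (C (R := R) (1 - q) * PowerSeries.mk (fun j => (qint (j + 1)) ^ (n+1))) *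
        ∏ i ∈ Finset.range (n + 2), (1 - C (R := R) (q ^ i) * X) := by ring
    _ = (PowerSeries.mk (fun j => (qint (j + 1)) ^ n)
          - C (R := R) q * PowerSeries.mk (fun j => q ^ j * (qint (j + 1)) ^ n)) *
        ∏ i ∈ Finset.range (n + 2), (1 - C (R := R) (q ^ i) * X) := by rw [hmk]
    _ = PowerSeries.mk (fun j => (qint (j + 1)) ^ n) *
          ∏ i ∈ Finset.range (n + 2), (1 - C (R := R) (q ^ i) * X)
        - C (R := R) q * (PowerSeries.mk (fun j => q ^ j * (qint (j + 1)) ^ n) *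
          ∏ i ∈ Finset.range (n + 2), (1 - C (R := R) (q ^ i) * X)) := by ring
    _ = (1 - C (R := R) (q ^ (n+1)) * X) * (A n : PowerSeries R)
        - C (R := R) q * (1 - X) * rescale q (A n : PowerSeries R) := by
        rw [hresc, hA n]
        nth_rewrite 1 [hprod2]
        rw [hprod]
        simp only [pow_zero, map_one]
        ring

/-- Carlitz's q-Eulerian coefficients `A_{n,k}(q)`, where
`A_n(t,q) = ∑_k A_{n,k}(q) t^{k-1}` is defined by
`∑_{j≥0} [j+1]_q^n t^j = A_n(t,q)/(t;q)_{n+1}`, satisfy the recurrence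
`A_{n,k}(q) = [k]_q A_{n-1,k}(q) + q^{k-1} [n+1-k]_q A_{n-1,k-1}(q)` for `1 ≤ k ≤ n`.
Here `A n` is a polynomial in `t` whose coefficients are polynomials in `q`, and
`Ank n k = A_{n,k}(q)` is its coefficient of `t^{k-1}` (with `Ank n 0 = 0`). -/
theorem carlitz_qEulerian_recurrence
    (A : ℕ → Polynomial (Polynomial ℤ))
    (hA : ∀ n, ((A n : PowerSeries (Polynomial ℤ)) =
      PowerSeries.mk (fun j => (qint (j + 1)) ^ n) *
        ∏ i ∈ Finset.range (n + 1),
          (1 - PowerSeries.C (R := Polynomial ℤ) (Polynomial.X ^ i) * PowerSeries.X)))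
    (Ank : ℕ → ℕ → Polynomial ℤ)
    (hAnk : ∀ n k, Ank n k = if k = 0 then 0 else (A n).coeff (k - 1)) :
    ∀ n k, 1 ≤ k → k ≤ n →
      Ank n k = qint k * Ank (n - 1) k +
        Polynomial.X ^ (k - 1) * qint (n + 1 - k) * Ank (n - 1) (k - 1) := by
  intro n k hk hn
  obtain ⟨N, rfl⟩ : ∃ N, n = N + 1 :=
    ⟨n - 1, (Nat.succ_pred_eq_of_pos (Nat.lt_of_lt_of_le Nat.zero_lt_one (hk.trans hn))).symm⟩
  obtain ⟨m, rfl⟩ : ∃ m, k = m + 1 :=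
    ⟨k - 1, (Nat.succ_pred_eq_of_pos hk).symm⟩
  have hne : (1 - Polynomial.X : Polynomial ℤ) ≠ 0 := by
    intro h
    have := congrArg (fun p => Polynomial.coeff p 0) h
    simp at this
  have hkey := key A hA N
  have hkey' : C (R := R) (1 - Polynomial.X) * ((A (N+1) : Polynomial R) : PowerSeries R) =
      ((A N : Polynomial R) : PowerSeries R)
      - C (R := R) (Polynomial.X ^ (N+1)) * (X * ((A N : Polynomial R) : PowerSeries R))
      - (C (R := R) Polynomial.X * rescale Polynomial.X ((A N : Polynomial R) : PowerSeries R)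
        - C (R := R) Polynomial.X * (X * rescale Polynomial.X ((A N : Polynomial R) : PowerSeries R))) := by
    rw [hkey]; ring
  simp only [hAnk, Nat.add_sub_cancel, Nat.succ_ne_zero, if_false]
  rcases m with _ | m'
  · -- k = 1
    have hc := congrArg (PowerSeries.coeff (R := R) 0) hkey'
    rw [coeff_C_mul] at hc
    simp only [LinearMap.map_sub, coeff_C_mul, coeff_zero_X_mul, coeff_rescale,
      Polynomial.coeff_coe, mul_zero, pow_zero, one_mul] at hc
    have h1 : qint 1 = 1 := by simp [qint]
    simp only [if_pos rfl, if_true, h1, one_mul, mul_zero, add_zero, pow_zero]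
    exact mul_left_cancel₀ hne (by linear_combination hc)
  · -- k = m' + 2
    have hmN : m' + 1 ≤ N := by omega
    have hc := congrArg (PowerSeries.coeff (R := R) (m' + 1)) hkey'
    rw [coeff_C_mul] at hc
    simp only [LinearMap.map_sub, coeff_C_mul, coeff_succ_X_mul, coeff_rescale,
      Polynomial.coeff_coe] at hc
    have hq1 : (1 - Polynomial.X) * qint (m' + 2) = 1 - Polynomial.X ^ (m' + 2) :=
      one_sub_X_mul_qint _
    have hq2 : (1 - Polynomial.X) * qint (N - m') = 1 - Polynomial.X ^ (N - m') :=
      one_sub_X_mul_qint _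
    have hpow : (Polynomial.X : Polynomial ℤ) ^ (m' + 1) * Polynomial.X ^ (N - m')
        = Polynomial.X ^ (N + 1) := by
      rw [← pow_add]; congr 1; omega
    have hexp : N + 1 + 1 - (m' + 1 + 1) = N - m' := by omega
    simp only [Nat.succ_ne_zero, if_false, Nat.add_sub_cancel, hexp]
    refine mul_left_cancel₀ hne ?_
    linear_combination hc - (A N).coeff (m' + 1) * hq1
      - (Polynomial.X : Polynomial ℤ) ^ (m' + 1) * (A N).coeff m' * hq2
      + (A N).coeff m' * hpow
end

section
/- Define polynomials a_{n,k}(q) by the recurrence a_{n,k}(q) = [k]_q a_{n-1,k}(q) + (1+q^{k-1}) q^{k-1} [n+2-2k]_q a_{n-1,k-1}(q) for n ≥ 2 and 1 ≤ k ≤ ⌊(n+1)/2⌋, with a_{1,1}(q) = 1 and a_{n,k}(q) = 0 for k ≤ 0 or k > ⌊(n+1)/2⌋. Then Carlitz's q-Eulerian polynomials satisfy A_n(t,q) = sum_{k=1}^{⌊(n+1)/2⌋} a_{n,k}(q) t^{k-1} (-tq^k; q)_{n+1-2k}. -/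
namespace CarlitzAux

open Finset

local notation "R" => Polynomial ℤ
local notation "q" => (Polynomial.X : Polynomial ℤ)
local notation "PC" => (PowerSeries.C : Polynomial ℤ →+* PowerSeries (Polynomial ℤ))
local notation "PX" => (PowerSeries.X : PowerSeries (Polynomial ℤ))

/-- `∏_{i<m} (1 + q^{k+i} t)` as a power series. -/
noncomputable def Gps (k m : ℕ) : PowerSeries R :=
  ∏ i ∈ range m, (1 + PC (q ^ (k + i)) * PX)

/-- The Carlitz power series `A_n` as `mk × product`. -/
noncomputable def Fps (n : ℕ) : PowerSeries R :=
  PowerSeries.mk (fun j => (qint (j + 1)) ^ n) *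
    ∏ i ∈ Finset.range (n + 1), (1 - PC (Polynomial.X ^ i) * PowerSeries.X)

/-- The gamma-expansion as a power series. -/
noncomputable def Bps (a : ℕ → ℕ → Polynomial ℤ) (n : ℕ) : PowerSeries R :=
  ∑ k ∈ Icc 1 ((n + 1) / 2), PC (a n k) * PX ^ (k - 1) * Gps k (n + 1 - 2 * k)

lemma qint_mul (m : ℕ) : (1 - q) * qint m = 1 - q ^ m := by
  have h := geom_sum_mul q m
  unfold qint
  linear_combination -h

lemma Gps_zero (k : ℕ) : Gps k 0 = 1 := by simp [Gps]

lemma Gps_succ (k m : ℕ) : Gps k (m + 1) = Gps k m * (1 + PC (q ^ (k + m)) * PX) := by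
  simp [Gps, prod_range_succ]

lemma Gps_succ' (k m : ℕ) : Gps k (m + 1) = (1 + PC (q ^ k) * PX) * Gps (k + 1) m := by
  rw [Gps, prod_range_succ', mul_comm, add_zero]
  refine congrArg (fun x : PowerSeries R => (1 + PC (q ^ k) * PX) * x) ?_
  rw [Gps]
  refine Finset.prod_congr rfl fun i _ => ?_
  rw [show k + (i + 1) = k + 1 + i by omega]

lemma rescale_PC (c : R) : PowerSeries.rescale q (PC c) = PC c := by
  ext n
  cases n <;> simp [PowerSeries.coeff_rescale, PowerSeries.coeff_C]

lemma rescale_Gps (k m : ℕ) : PowerSeries.rescale q (Gps k m) = Gps (k + 1) m := by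
  rw [Gps, map_prod, Gps]
  refine Finset.prod_congr rfl fun i _ => ?_
  rw [map_add, map_one, map_mul, rescale_PC, PowerSeries.rescale_X]
  rw [show (PC (q ^ (k + i)) * (PC q * PX) : PowerSeries R) = PC (q ^ (k + i) * q) * PX by
    rw [map_mul]; ring]
  rw [← pow_succ, show k + i + 1 = k + 1 + i by omega]

lemma rescale_term (c : R) (e k m : ℕ) :
    PowerSeries.rescale q (PC c * PX ^ e * Gps k m) = PC (c * q ^ e) * PX ^ e * Gps (k + 1) m := by
  rw [map_mul, map_mul, map_pow, rescale_PC, PowerSeries.rescale_X, rescale_Gps, mul_pow,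
    ← map_pow, map_mul PC c (q ^ e)]
  ring

lemma mk_geom (c : R) :
    PowerSeries.mk (fun j => c ^ j) * (1 - PC c * PX) = 1 := by
  ext n
  have h : (PowerSeries.mk (fun j => c ^ j) * (PC c * PX) : PowerSeries R)
      = PC c * (PX * PowerSeries.mk (fun j => c ^ j)) := by ring
  rw [mul_sub, mul_one, map_sub, h]
  cases n with
  | zero => simp [PowerSeries.coeff_C_mul]
  | succ m =>
      simp [PowerSeries.coeff_C_mul, PowerSeries.coeff_succ_X_mul, pow_succ,
        PowerSeries.coeff_one, mul_comm]

lemma mk_qint_shift :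
    PowerSeries.mk (fun j => qint (j + 1)) * (1 - PX) = PowerSeries.mk (fun j => q ^ j) := by
  ext n
  rw [mul_sub, mul_one, map_sub, mul_comm]
  cases n with
  | zero => simp [qint]
  | succ m =>
      rw [PowerSeries.coeff_succ_X_mul]
      simp [qint, Finset.sum_range_succ]

lemma Fps_one : Fps 1 = 1 := by
  rw [Fps, prod_range_succ, prod_range_succ, prod_range_zero, one_mul, pow_zero, pow_one,
    map_one]
  have h1 : (PowerSeries.mk (fun j => (qint (j + 1)) ^ 1) : PowerSeries R)
      = PowerSeries.mk (fun j => qint (j + 1)) := by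
    ext j
    simp
  rw [h1, ← mul_assoc,
    show ((1 : PowerSeries R) - 1 * PowerSeries.X) = 1 - PowerSeries.X by ring,
    mk_qint_shift, mk_geom]

lemma mk_rel (n : ℕ) :
    PC (1 - q) * PowerSeries.mk (fun j => (qint (j + 1)) ^ (n + 1)) =
      PowerSeries.mk (fun j => (qint (j + 1)) ^ n) -
        PC q * PowerSeries.mk (fun j => q ^ j * (qint (j + 1)) ^ n) := by
  apply PowerSeries.ext
  intro j
  rw [PowerSeries.coeff_C_mul, map_sub, PowerSeries.coeff_C_mul]
  simp only [PowerSeries.coeff_mk]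
  linear_combination (qint (j + 1)) ^ n * qint_mul (j + 1)

lemma Fps_rel (n : ℕ) :
    PC (1 - q) * Fps (n + 1) =
      (1 - PC (q ^ (n + 1)) * PX) * Fps n -
        PC q * (1 - PX) * PowerSeries.rescale q (Fps n) := by
  have hres : PowerSeries.rescale q (Fps n) =
      PowerSeries.mk (fun j => q ^ j * (qint (j + 1)) ^ n) *
        ∏ i ∈ Finset.range (n + 1), (1 - PC (q ^ (i + 1)) * PX) := by
    rw [Fps, map_mul, PowerSeries.rescale_mk, map_prod]
    congr 1
    refine Finset.prod_congr rfl fun i _ => ?_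
    rw [map_sub, map_one, map_mul, rescale_PC, PowerSeries.rescale_X,
      show (PC (q ^ i) * (PC q * PX) : PowerSeries R) = PC (q ^ i * q) * PX by
        rw [map_mul]; ring, ← pow_succ]
  have hP1 : (∏ i ∈ Finset.range (n + 2), (1 - PC (q ^ i) * PX) : PowerSeries R)
      = (∏ i ∈ Finset.range (n + 1), (1 - PC (q ^ i) * PX)) * (1 - PC (q ^ (n + 1)) * PX) :=
    prod_range_succ _ _
  have hQ : (∏ i ∈ Finset.range (n + 2), (1 - PC (q ^ i) * PX) : PowerSeries R)
      = (1 - PX) * ∏ i ∈ Finset.range (n + 1), (1 - PC (q ^ (i + 1)) * PX) := by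
    rw [prod_range_succ', pow_zero, map_one, one_mul, mul_comm]
  rw [hres, Fps, Fps, show n + 1 + 1 = n + 2 from rfl, ← mul_assoc, mk_rel n]
  linear_combination (PowerSeries.mk fun j => (qint (j + 1)) ^ n) * hP1 -
    (PC q * PowerSeries.mk fun j => q ^ j * (qint (j + 1)) ^ n) * hQ

/-- first summand after applying the recurrence -/
noncomputable def S1 (a : ℕ → ℕ → R) (n k : ℕ) : PowerSeries R :=
  PC ((1 - q ^ k) * a n k) * PX ^ (k - 1) * Gps k (n + 2 - 2 * k)

/-- second summand after applying the recurrence, reindexed -/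
noncomputable def Tt (a : ℕ → ℕ → R) (n i : ℕ) : PowerSeries R :=
  PC ((1 + q ^ i) * q ^ i * (1 - q ^ (n + 1 - 2 * i)) * a n i) * PX ^ i * Gps (i + 1) (n - 2 * i)

/-- The key polynomial identity behind the gamma-expansion recurrence. -/
lemma dagger (n k : ℕ) (hk : 1 ≤ k) (h2k : 2 * k ≤ n + 1) :
    PC (1 - q ^ k) * Gps k (n + 2 - 2 * k) +
      PC ((1 + q ^ k) * q ^ k * (1 - q ^ (n + 1 - 2 * k))) * PX * Gps (k + 1) (n - 2 * k)
    = (1 - PC (q ^ (n + 1)) * PX) * Gps k (n + 1 - 2 * k) -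
        PC (q ^ k) * (1 - PX) * Gps (k + 1) (n + 1 - 2 * k) := by
  rcases Nat.lt_or_ge n (2 * k) with hlt | hge
  · -- boundary case : 2 * k = n + 1
    have h1 : 2 * k = n + 1 := by omega
    rw [show n + 2 - 2 * k = 1 by omega, show n + 1 - 2 * k = 0 by omega,
      show n - 2 * k = 0 by omega, Gps_zero, Gps_zero]
    rw [show Gps k 1 = 1 + PC (q ^ k) * PX by
      rw [show (1 : ℕ) = 0 + 1 from rfl, Gps_succ, Gps_zero, one_mul, add_zero]]
    rw [pow_zero, sub_self, mul_zero, map_zero, zero_mul, zero_mul, add_zero,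
      show n + 1 = k + k by omega, pow_add, map_mul, map_sub, map_one]
    ring
  · -- generic case : 2 * k ≤ n
    obtain ⟨j, hj⟩ : ∃ j, n = 2 * k + j := ⟨n - 2 * k, by omega⟩
    subst hj
    rw [show 2 * k + j + 2 - 2 * k = j + 1 + 1 by omega,
      show 2 * k + j + 1 - 2 * k = j + 1 by omega,
      show 2 * k + j - 2 * k = j by omega]
    rw [Gps_succ' k (j + 1), Gps_succ' k j, Gps_succ (k + 1) j,
      show k + 1 + j = k + (j + 1) by omega,
      show 2 * k + j + 1 = k + k + (j + 1) by omega]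
    simp only [pow_add, map_mul, map_sub, map_add, map_one, pow_one]
    ring

lemma finalstep (a : ℕ → ℕ → R)
    (ha0 : ∀ n k, 1 ≤ n → (k = 0 ∨ (n + 1) / 2 < k) → a n k = 0)
    (n i : ℕ) (hn : 1 ≤ n) :
    S1 a n (1 + i) + Tt a n (i + 1)
      = (1 - PC (q ^ (n + 1)) * PX) *
          (PC (a n (1 + i)) * PX ^ (1 + i - 1) * Gps (1 + i) (n + 1 - 2 * (1 + i))) -
        PC q * (1 - PX) *
          (PC (a n (1 + i) * q ^ (1 + i - 1)) * PX ^ (1 + i - 1) *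
            Gps (1 + i + 1) (n + 1 - 2 * (1 + i))) := by
  rw [show 1 + i = i + 1 by omega]
  rcases le_or_gt (2 * (i + 1)) (n + 1) with h2k | h2k
  · have hd := dagger n (i + 1) (by omega) h2k
    rw [S1, Tt, show i + 1 - 1 = i by omega]
    simp only [map_mul, map_sub, map_add, map_one, pow_succ] at hd ⊢
    linear_combination (PC (a n (i + 1)) * PX ^ i) * hd
  · have hz : a n (i + 1) = 0 := ha0 n (i + 1) hn (Or.inr (by omega))
    rw [S1, Tt, hz]
    simp

lemma Bps_rel (a : ℕ → ℕ → R)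
    (ha0 : ∀ n k, 1 ≤ n → (k = 0 ∨ (n + 1) / 2 < k) → a n k = 0)
    (harec : ∀ n k, 2 ≤ n → 1 ≤ k → k ≤ (n + 1) / 2 →
      a n k = qint k * a (n - 1) k +
        (1 + Polynomial.X ^ (k - 1)) * Polynomial.X ^ (k - 1) * qint (n + 2 - 2 * k) *
          a (n - 1) (k - 1))
    (n : ℕ) (hn : 1 ≤ n) :
    PC (1 - q) * Bps a (n + 1) =
      (1 - PC (q ^ (n + 1)) * PX) * Bps a n -
        PC q * (1 - PX) * PowerSeries.rescale q (Bps a n) := by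
  have h2 : 2 ≤ n + 1 := by omega
  have hBn : Bps a n = ∑ k ∈ Icc 1 ((n + 1 + 1) / 2),
      PC (a n k) * PX ^ (k - 1) * Gps k (n + 1 - 2 * k) := by
    rw [Bps]
    refine Finset.sum_subset (fun k hk => ?_) (fun k hk hk' => ?_)
    · simp only [mem_Icc] at *; omega
    · have hz : a n k = 0 := ha0 n k hn (Or.inr (by simp only [mem_Icc] at hk hk'; omega))
      rw [hz, map_zero, zero_mul, zero_mul]
  have hres : PowerSeries.rescale q (Bps a n) = ∑ k ∈ Icc 1 ((n + 1 + 1) / 2),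
      PC (a n k * q ^ (k - 1)) * PX ^ (k - 1) * Gps (k + 1) (n + 1 - 2 * k) := by
    rw [hBn, map_sum]
    exact Finset.sum_congr rfl fun k _ => rescale_term _ _ _ _
  rw [hres, hBn,
    show Bps a (n + 1) = ∑ k ∈ Icc 1 ((n + 1 + 1) / 2),
      PC (a (n + 1) k) * PX ^ (k - 1) * Gps k (n + 1 + 1 - 2 * k) from rfl]
  simp only [Finset.mul_sum]
  rw [← Finset.sum_sub_distrib]
  rw [show (Icc 1 ((n + 1 + 1) / 2) : Finset ℕ) = Ico 1 ((n + 1 + 1) / 2 + 1) from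
    (Finset.Ico_add_one_right_eq_Icc _ _)]
  rw [Finset.sum_Ico_eq_sum_range, Finset.sum_Ico_eq_sum_range,
    show (n + 1 + 1) / 2 + 1 - 1 = (n + 1 + 1) / 2 by omega]
  have hshift : ∑ i ∈ range ((n + 1 + 1) / 2), Tt a n i
      = ∑ i ∈ range ((n + 1 + 1) / 2), Tt a n (i + 1) := by
    have h0 : Tt a n 0 = 0 := by
      rw [Tt, ha0 n 0 hn (Or.inl rfl)]
      simp
    have hM0 : Tt a n ((n + 1 + 1) / 2) = 0 := by
      by_cases hcase : 2 * ((n + 1 + 1) / 2) = n + 1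
      · rw [Tt, show n + 1 - 2 * ((n + 1 + 1) / 2) = 0 by omega]
        simp
      · rw [Tt, ha0 n ((n + 1 + 1) / 2) hn (Or.inr (by omega))]
        simp
    have e1 := Finset.sum_range_succ (Tt a n) ((n + 1 + 1) / 2)
    have e2 := Finset.sum_range_succ' (Tt a n) ((n + 1 + 1) / 2)
    rw [hM0, add_zero] at e1
    rw [h0, add_zero] at e2
    rw [← e1, e2]
  trans (∑ i ∈ Finset.range ((n + 1 + 1) / 2), (S1 a n (1 + i) + Tt a n i))
  · refine Finset.sum_congr rfl fun i hi => ?_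
    rw [mem_range] at hi
    have hk1 : 1 ≤ 1 + i := by omega
    have hkM : 1 + i ≤ (n + 1 + 1) / 2 := by omega
    rw [harec (n + 1) (1 + i) h2 hk1 hkM, show n + 1 - 1 = n from rfl]
    have key : ∀ (c : R) (e : ℕ) (G : PowerSeries R),
        PC (1 - q) * (PC c * PX ^ e * G) = PC ((1 - q) * c) * PX ^ e * G := by
      intro c e G
      rw [map_mul]
      ring
    rw [key]
    have hc : (1 - q) * (qint (1 + i) * a n (1 + i) +
        (1 + q ^ (1 + i - 1)) * q ^ (1 + i - 1) * qint (n + 1 + 2 - 2 * (1 + i)) * a n (1 + i - 1))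
        = (1 - q ^ (1 + i)) * a n (1 + i)
          + (1 + q ^ i) * q ^ i * (1 - q ^ (n + 1 - 2 * i)) * a n i := by
      rw [show 1 + i - 1 = i by omega, show n + 1 + 2 - 2 * (1 + i) = n + 1 - 2 * i by omega]
      linear_combination (a n (1 + i)) * qint_mul (1 + i)
        + ((1 + q ^ i) * q ^ i * (a n i)) * qint_mul (n + 1 - 2 * i)
    have hS1 : S1 a n (1 + i) = PC ((1 - q ^ (1 + i)) * a n (1 + i)) * PX ^ (1 + i - 1) *
        Gps (1 + i) (n + 1 + 1 - 2 * (1 + i)) := by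
      rw [S1, show n + 2 - 2 * (1 + i) = n + 1 + 1 - 2 * (1 + i) by omega]
    have hTt : Tt a n i = PC ((1 + q ^ i) * q ^ i * (1 - q ^ (n + 1 - 2 * i)) * a n i) *
        PX ^ (1 + i - 1) * Gps (1 + i) (n + 1 + 1 - 2 * (1 + i)) := by
      rw [Tt, show 1 + i - 1 = i by omega, show 1 + i = i + 1 by omega,
        show n + 1 + 1 - 2 * (i + 1) = n - 2 * i by omega]
    rw [hc, map_add, add_mul, add_mul, hS1, hTt]
  · rw [Finset.sum_add_distrib, hshift, ← Finset.sum_add_distrib]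
    exact Finset.sum_congr rfl fun i hi => finalstep a ha0 n i hn

lemma Bps_eq_Fps (a : ℕ → ℕ → R)
    (ha11 : a 1 1 = 1)
    (ha0 : ∀ n k, 1 ≤ n → (k = 0 ∨ (n + 1) / 2 < k) → a n k = 0)
    (harec : ∀ n k, 2 ≤ n → 1 ≤ k → k ≤ (n + 1) / 2 →
      a n k = qint k * a (n - 1) k +
        (1 + Polynomial.X ^ (k - 1)) * Polynomial.X ^ (k - 1) * qint (n + 2 - 2 * k) *
          a (n - 1) (k - 1)) :
    ∀ n, 1 ≤ n → Bps a n = Fps n := by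
  intro n hn
  induction n, hn using Nat.le_induction with
  | base =>
      have h1 : Bps a 1 = 1 := by
        rw [Bps, show (1 + 1) / 2 = 1 from rfl, Finset.Icc_self, Finset.sum_singleton,
          ha11, show 1 + 1 - 2 * 1 = 0 from rfl, Gps_zero]
        simp
      rw [h1, Fps_one]
  | succ m hm ih =>
      have h1 := Bps_rel a ha0 harec m hm
      rw [ih, ← Fps_rel m] at h1
      have hC : (PC (1 - q) : PowerSeries R) ≠ 0 := by
        intro h
        have h2 := congrArg PowerSeries.constantCoeff h
        rw [PowerSeries.constantCoeff_C, map_zero, sub_eq_zero] at h2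
        have h3 := congrArg (Polynomial.eval (0 : ℤ)) h2
        simp at h3
      exact mul_left_cancel₀ hC h1

end CarlitzAux

/-- With `a_{n,k}(q)` defined by the recurrence
`a_{n,k}(q) = [k]_q a_{n-1,k}(q) + (1+q^{k-1}) q^{k-1} [n+2-2k]_q a_{n-1,k-1}(q)`
for `n ≥ 2`, `1 ≤ k ≤ ⌊(n+1)/2⌋`, `a_{1,1}(q) = 1`, and `a_{n,k}(q) = 0` for
`k ≤ 0` or `k > ⌊(n+1)/2⌋`, Carlitz's q-Eulerian polynomials (defined by
`∑_{j≥0}[j+1]_q^n t^j = A_n(t,q)/(t;q)_{n+1}`) satisfy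
`A_n(t,q) = ∑_{k=1}^{⌊(n+1)/2⌋} a_{n,k}(q) t^{k-1} (-tq^k;q)_{n+1-2k}`. -/
theorem carlitz_qEulerian_gamma_expansion
    (A : ℕ → Polynomial (Polynomial ℤ))
    (hA : ∀ n, ((A n : PowerSeries (Polynomial ℤ)) =
      PowerSeries.mk (fun j => (qint (j + 1)) ^ n) *
        ∏ i ∈ Finset.range (n + 1),
          (1 - PowerSeries.C (R := Polynomial ℤ) (Polynomial.X ^ i) * PowerSeries.X)))
    (a : ℕ → ℕ → Polynomial ℤ)
    (ha11 : a 1 1 = 1)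
    (ha0 : ∀ n k, 1 ≤ n → (k = 0 ∨ (n + 1) / 2 < k) → a n k = 0)
    (harec : ∀ n k, 2 ≤ n → 1 ≤ k → k ≤ (n + 1) / 2 →
      a n k = qint k * a (n - 1) k +
        (1 + Polynomial.X ^ (k - 1)) * Polynomial.X ^ (k - 1) * qint (n + 2 - 2 * k) *
          a (n - 1) (k - 1)) :
    ∀ n, 1 ≤ n →
      A n = ∑ k ∈ Finset.Icc 1 ((n + 1) / 2),
        Polynomial.C (a n k) * Polynomial.X ^ (k - 1) *
          ∏ i ∈ Finset.range (n + 1 - 2 * k),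
            ((1 + Polynomial.C ((Polynomial.X : Polynomial ℤ) ^ (k + i)) * Polynomial.X : Polynomial (Polynomial ℤ))) := by
  intro n hn
  have hcoe : ((∑ k ∈ Finset.Icc 1 ((n + 1) / 2),
        Polynomial.C (a n k) * Polynomial.X ^ (k - 1) *
          ∏ i ∈ Finset.range (n + 1 - 2 * k),
            ((1 + Polynomial.C ((Polynomial.X : Polynomial ℤ) ^ (k + i)) * Polynomial.X :
              Polynomial (Polynomial ℤ))) : Polynomial (Polynomial ℤ)) :
      PowerSeries (Polynomial ℤ)) = CarlitzAux.Bps a n := by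
    simp only [CarlitzAux.Bps, CarlitzAux.Gps]
    rw [← Polynomial.coeToPowerSeries.ringHom_apply, map_sum]
    refine Finset.sum_congr rfl fun k _ => ?_
    rw [map_mul, map_mul, map_pow, map_prod]
    congr 1
    · congr 1
      · rw [Polynomial.coeToPowerSeries.ringHom_apply, Polynomial.coe_C]
      · rw [Polynomial.coeToPowerSeries.ringHom_apply, Polynomial.coe_X]
    · refine Finset.prod_congr rfl fun i _ => ?_
      rw [map_add, map_one, map_mul, Polynomial.coeToPowerSeries.ringHom_apply,
        Polynomial.coeToPowerSeries.ringHom_apply, Polynomial.coe_C, Polynomial.coe_X]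
  apply (Polynomial.coe_inj).mp
  rw [hA n, hcoe]
  exact (CarlitzAux.Bps_eq_Fps a ha11 ha0 harec n hn).symm
end

section
/- With a_{n,k}(q) defined by the recurrence a_{n,k}(q) = [k]_q a_{n-1,k}(q) + (1+q^{k-1}) q^{k-1} [n+2-2k]_q a_{n-1,k-1}(q) (a_{1,1}(q)=1, zero outside the range), the q-Eulerian coefficients satisfy A_{n,k}(q) = sum_{s≥1} qBinom(n+1-2s, k-s; q) · q^{(k-s)s + binom(k-s,2)} · a_{n,s}(q). -/
open Polynomial Finset


/-- The Gaussian (q-binomial) coefficient `[n choose k]_q`, via the q-Pascal rule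
`[n+1 choose k+1]_q = [n choose k]_q + q^{k+1} [n choose k+1]_q`. -/
noncomputable def qbinom : ℕ → ℕ → Polynomial ℤ
  | _, 0 => 1
  | 0, _ + 1 => 0
  | n + 1, k + 1 => qbinom n k + Polynomial.X ^ (k + 1) * qbinom n (k + 1)

lemma qint_zero : qint 0 = 0 := by simp [qint]
lemma qint_one : qint 1 = 1 := by simp [qint]

lemma qint_add (a b : ℕ) : qint (a + b) = qint a + X ^ a * qint b := by
  unfold qint
  rw [Finset.sum_range_add, Finset.mul_sum]
  congr 1
  exact Finset.sum_congr rfl fun i _ => by rw [pow_add]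

lemma qbinom_zero_right (n : ℕ) : qbinom n 0 = 1 := by cases n <;> rfl

lemma qbinom_pascal (n k : ℕ) : qbinom (n+1) (k+1) = qbinom n k + X^(k+1) * qbinom n (k+1) := rfl

lemma qbinom_eq_zero : ∀ {n k : ℕ}, n < k → qbinom n k = 0 := by
  intro n
  induction n with
  | zero =>
    intro k h
    match k, h with
    | k+1, _ => rfl
  | succ n ih =>
    intro k h
    match k, h with
    | k+1, h =>
      rw [qbinom_pascal, ih (by omega), ih (by omega)]
      ring

lemma qbinom_one (n : ℕ) : qbinom n 1 = qint n := by
  induction n with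
  | zero => rw [qint_zero]; rfl
  | succ n ih =>
    rw [qbinom_pascal, qbinom_zero_right, ih, show n+1 = 1+n from by omega, qint_add, qint_one]

lemma qbinom_zero_succ (k : ℕ) : qbinom 0 (k+1) = 0 := rfl

lemma qbinom_self (n : ℕ) : qbinom n n = 1 := by
  induction n with
  | zero => rfl
  | succ n ih => rw [qbinom_pascal, ih, qbinom_eq_zero (by omega)]; ring

lemma K2 : ∀ n k : ℕ, qbinom (n+1) (k+1) = qbinom n (k+1) + X^(n-k) * qbinom n k := by
  intro n
  induction n with
  | zero =>
    intro k
    cases k with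
    | zero => simp [qbinom_pascal, qbinom_zero_right, qbinom_zero_succ]
    | succ k => simp [qbinom_pascal, qbinom_zero_succ]
  | succ n ih =>
    intro k
    cases k with
    | zero =>
      rw [qbinom_one, qbinom_one, qbinom_zero_right, Nat.sub_zero, qint_add (n+1) 1, qint_one]
    | succ K =>
      rcases Nat.lt_or_ge K n with hK | hK
      · obtain ⟨d, rfl⟩ : ∃ d, n = K+1+d := ⟨n-(K+1), by omega⟩
        have h2 := ih (K+1)
        have h5 := ih K
        rw [show K+1+d-(K+1) = d from by omega] at h2
        rw [show K+1+d-K = d+1 from by omega] at h5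
        rw [show K+1+d+1-(K+1) = d+1 from by omega]
        linear_combination qbinom_pascal (K+1+d+1) (K+1) + X^(K+2)*h2
          - qbinom_pascal (K+1+d) (K+1) - X^(d+1)*(qbinom_pascal (K+1+d) K) + h5
      · by_cases hKn : K = n
        · subst hKn
          rw [show K+1-(K+1) = 0 from by omega, qbinom_eq_zero (show K+1 < K+2 from by omega),
            qbinom_self, qbinom_self]
          ring
        · rw [qbinom_eq_zero (show n+1+1 < K+1+1 from by omega),
            qbinom_eq_zero (show n+1 < K+1+1 from by omega),
            qbinom_eq_zero (show n+1 < K+1 from by omega)]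
          ring

lemma K5 : ∀ n k : ℕ, qint (n-k) * qbinom n k = qint (k+1) * qbinom n (k+1) := by
  intro n
  induction n with
  | zero =>
    intro k
    cases k with
    | zero => simp [qbinom_zero_succ, qint_zero, qbinom_zero_right]
    | succ k => simp [qbinom_zero_succ, qint_zero]
  | succ n ih =>
    intro k
    cases k with
    | zero => rw [Nat.sub_zero, qbinom_zero_right, qbinom_one, qint_one, mul_one, one_mul]
    | succ K =>
      rcases Nat.lt_or_ge (K+1) (n+1) with h | h
      · obtain ⟨d, rfl⟩ : ∃ d, n = K+1+d := ⟨n-(K+1), by omega⟩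
        rw [show K+1+d+1-(K+1) = d+1 from by omega]
        have hK2 := K2 (K+1+d) K
        rw [show K+1+d-K = d+1 from by omega] at hK2
        have hP := qbinom_pascal (K+1+d) (K+1)
        have ihK := ih K
        rw [show K+1+d-K = d+1 from by omega] at ihK
        have ihK1 := ih (K+1)
        rw [show K+1+d-(K+1) = d from by omega] at ihK1
        have hq : qint (d+1) + X^(d+1)*qint (K+1) = qint (K+2) + X^(K+2)*qint d := by
          rw [← qint_add, ← qint_add]
          exact congrArg qint (by omega)
        linear_combination qint (d+1)*hK2 - qint (K+2)*hP + X^(d+1)*ihK + X^(K+2)*ihK1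
          + qbinom (K+1+d) (K+1) * hq
      · have hz2 : qbinom (n+1) (K+2) = 0 := qbinom_eq_zero (by omega)
        by_cases hKn : K = n
        · subst hKn
          rw [show K+1-(K+1) = 0 from by omega, qint_zero, hz2]
          ring
        · rw [qbinom_eq_zero (show n+1 < K+1 from by omega), hz2]
          ring

lemma C4 (n k : ℕ) : qint (n+1-k) * qbinom (n+1) k = qint (n+1) * qbinom n k := by
  cases k with
  | zero => rw [Nat.sub_zero, qbinom_zero_right, qbinom_zero_right]
  | succ K =>
    rcases Nat.lt_or_ge K (n+1) with h | h
    · obtain ⟨d, rfl⟩ : ∃ d, n = K+d := ⟨n-K, by omega⟩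
      rw [show K+d+1-(K+1) = d from by omega]
      have hK2 := K2 (K+d) K
      rw [show K+d-K = d from by omega] at hK2
      have hK5 := K5 (K+d) K
      rw [show K+d-K = d from by omega] at hK5
      have hq : qint (K+d+1) = qint d + X^d * qint (K+1) := by
        rw [← qint_add]
        exact congrArg qint (by omega)
      linear_combination qint d * hK2 + X^d * hK5 - qbinom (K+d) (K+1) * hq
    · rw [show n+1-(K+1) = 0 from by omega, qint_zero,
        qbinom_eq_zero (show n < K+1 from by omega)]
      ring

lemma C3 (n k : ℕ) : qint (k+1) * qbinom (n+1) (k+1) = qint (n+1) * qbinom n k := by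
  have h5 := K5 (n+1) k
  rw [show n+1-k = n+1-k from rfl] at h5
  have h4 := C4 n k
  linear_combination h4 - h5

lemma key' (M i s : ℕ) :
    qint (i+1+s) * qbinom M (i+1) + qint (M+s-i) * qbinom M i
      = qint s * qbinom (M+1) (i+1) + (1+X^s) * qint M * qbinom (M-1) i := by
  cases M with
  | zero =>
    cases i with
    | zero =>
      simp only [qbinom_zero_succ, qbinom_zero_right, qint_zero, Nat.zero_add, Nat.sub_zero,
        Nat.zero_sub]
      rw [qbinom_self]
      ring
    | succ i =>
      rw [qbinom_zero_succ, qbinom_zero_succ, qint_zero,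
        qbinom_eq_zero (show 0+1 < i+1+1 from by omega)]
      ring
  | succ N =>
    simp only [Nat.add_sub_cancel]
    rcases Nat.lt_or_ge i (N+2) with h | h
    · rw [show N+1+s-i = (N+1-i)+s from by omega]
      have e1 : qint (i+1+s) = qint s + X^s * qint (i+1) := by
        rw [show i+1+s = s+(i+1) from by omega, qint_add]
      have e2 : qint ((N+1-i)+s) = qint (N+1-i) + X^(N+1-i) * qint s := qint_add _ _
      have e3 := K2 (N+1) i
      have e4 := C3 N i
      have e5 := C4 N i
      linear_combination qbinom (N+1) (i+1) * e1 + qbinom (N+1) i * e2 - qint s * e3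
        + X^s * e4 + e5
    · rw [qbinom_eq_zero (show N+1 < i+1 from by omega),
        qbinom_eq_zero (show N+1 < i from by omega),
        qbinom_eq_zero (show N+1+1 < i+1 from by omega),
        qbinom_eq_zero (show N < i from by omega)]
      ring

lemma choose_two_succ (r : ℕ) : (r+1).choose 2 = r + r.choose 2 := by
  rw [show (2:ℕ) = 1+1 from rfl, Nat.choose_succ_succ, Nat.choose_one_right]

lemma sum_Icc_one (K : ℕ) (f : ℕ → Polynomial ℤ) :
    (∑ s ∈ Icc 1 K, f s) = ∑ t ∈ range K, f (t+1) := by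
  induction K with
  | zero => simp
  | succ K ih => rw [Finset.sum_Icc_succ_top (by omega), ih, Finset.sum_range_succ]

/-- With `a_{n,k}(q)` defined by the recurrence
`a_{n,k}(q) = [k]_q a_{n-1,k}(q) + (1+q^{k-1}) q^{k-1} [n+2-2k]_q a_{n-1,k-1}(q)`
(`a_{1,1}(q) = 1`, zero outside the range), and with Carlitz's q-Eulerian numbers
`A_{n,k}(q)` defined by `A_{n,k} = [k]_q A_{n-1,k} + q^{k-1}[n+1-k]_q A_{n-1,k-1}`
with `A_{1,1}(q) = 1` (zero outside `1 ≤ k ≤ n`), one has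
`A_{n,k}(q) = ∑_{s≥1} [n+1-2s choose k-s]_q q^{(k-s)s + binom(k-s,2)} a_{n,s}(q)`. -/
theorem carlitz_qEulerian_coeff_expansion
    (Ank : ℕ → ℕ → Polynomial ℤ)
    (hA11 : Ank 1 1 = 1)
    (hA0 : ∀ n k, 1 ≤ n → (k = 0 ∨ n < k) → Ank n k = 0)
    (hArec : ∀ n k, 2 ≤ n → 1 ≤ k → k ≤ n →
      Ank n k = qint k * Ank (n - 1) k +
        Polynomial.X ^ (k - 1) * qint (n + 1 - k) * Ank (n - 1) (k - 1))
    (a : ℕ → ℕ → Polynomial ℤ)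
    (ha11 : a 1 1 = 1)
    (ha0 : ∀ n k, 1 ≤ n → (k = 0 ∨ (n + 1) / 2 < k) → a n k = 0)
    (harec : ∀ n k, 2 ≤ n → 1 ≤ k → k ≤ (n + 1) / 2 →
      a n k = qint k * a (n - 1) k +
        (1 + Polynomial.X ^ (k - 1)) * Polynomial.X ^ (k - 1) * qint (n + 2 - 2 * k) *
          a (n - 1) (k - 1)) :
    ∀ n k, 1 ≤ n → 1 ≤ k → k ≤ n →
      Ank n k = ∑ s ∈ Finset.Icc 1 k,
        qbinom (n + 1 - 2 * s) (k - s) *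
          Polynomial.X ^ ((k - s) * s + Nat.choose (k - s) 2) * a n s := by
  intro n
  induction n with
  | zero => intro k h; exact absurd h (by norm_num)
  | succ m IH =>
    intro k hn hk1 hkn
    obtain ⟨K1, rfl⟩ : ∃ K1, k = K1 + 1 := ⟨k - 1, by omega⟩
    by_cases hm0 : m = 0
    · subst hm0
      have hK10 : K1 = 0 := by omega
      subst hK10
      norm_num [Finset.Icc_self, hA11, ha11, qbinom_zero_right]
    have hm1 : 1 ≤ m := by omega
    -- extended recurrence for a at level m+1
    have ha' : ∀ s, 1 ≤ s → a (m+1) s =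
        qint s * a m s + (1 + X ^ (s-1)) * X ^ (s-1) * qint (m+1+2-2*s) * a m (s-1) := by
      intro s hs
      by_cases hsle : s ≤ (m+1+1)/2
      · have h := harec (m+1) s (by omega) hs hsle
        simpa only [Nat.add_sub_cancel] using h
      · rw [ha0 (m+1) s (by omega) (Or.inr (by omega)),
          ha0 m s hm1 (Or.inr (by omega)),
          show m+1+2-2*s = 0 from by omega, qint_zero]
        ring
    -- B m K = 0 for K > m
    have hS0 : ∀ K, m < K →
        (∑ s ∈ Icc 1 K, qbinom (m+1-2*s) (K-s) * X ^ ((K-s)*s + (K-s).choose 2) * a m s)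
          = 0 := by
      intro K hK
      refine Finset.sum_eq_zero fun s hs => ?_
      simp only [Finset.mem_Icc] at hs
      by_cases h2s : 2*s ≤ m+1
      · rw [qbinom_eq_zero (show m+1-2*s < K-s from by omega)]; ring
      · rw [ha0 m s hm1 (Or.inr (by omega))]; ring
    have hAk : Ank m (K1+1) = ∑ s ∈ Icc 1 (K1+1),
        qbinom (m+1-2*s) (K1+1-s) * X ^ ((K1+1-s)*s + (K1+1-s).choose 2) * a m s := by
      by_cases h : K1+1 ≤ m
      · exact IH (K1+1) hm1 (by omega) h
      · rw [hA0 m (K1+1) hm1 (Or.inr (by omega)), hS0 (K1+1) (by omega)]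
    have hAk1 : Ank m K1 = ∑ s ∈ Icc 1 K1,
        qbinom (m+1-2*s) (K1-s) * X ^ ((K1-s)*s + (K1-s).choose 2) * a m s := by
      by_cases h : 1 ≤ K1
      · exact IH K1 hm1 h (by omega)
      · have h0 : K1 = 0 := by omega
        subst h0
        rw [hA0 m 0 hm1 (Or.inl rfl)]
        simp
    rw [hArec (m+1) (K1+1) (by omega) (by omega) hkn]
    simp only [Nat.add_sub_cancel]
    rw [hAk, hAk1]
    rw [sum_Icc_one, sum_Icc_one, sum_Icc_one]
    -- rewrite a (m+1) (t+1) on the RHS via the recurrence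
    have pmul_add : ∀ x y z : Polynomial ℤ, x * (y + z) = x * y + x * z :=
      fun x y z => mul_add x y z
    conv_rhs => rw [Finset.sum_congr rfl fun t _ => by rw [ha' (t+1) (by omega)]]
    simp only [Nat.add_sub_cancel, pmul_add]
    rw [Finset.sum_add_distrib]
    conv_lhs => rw [Finset.sum_range_succ]
    conv_rhs => rw [Finset.sum_range_succ, Finset.sum_range_succ']
    rw [ha0 m 0 hm1 (Or.inl rfl)]
    simp only [mul_zero, add_zero]
    rw [pmul_add, Finset.mul_sum, Finset.mul_sum]
    conv_lhs => rw [add_right_comm, ← Finset.sum_add_distrib]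
    conv_rhs => rw [add_right_comm, ← Finset.sum_add_distrib]
    refine congrArg₂ (· + ·) ?_ ?_
    · refine Finset.sum_congr rfl fun t ht => ?_
      simp only [Finset.mem_range] at ht
      by_cases h2s : 2*(t+1) ≤ m+1
      · obtain ⟨M, hM⟩ : ∃ M, m + 1 = M + 2*(t+1) := ⟨m+1-2*(t+1), by omega⟩
        obtain ⟨i, hi⟩ : ∃ i, K1 = t+1+i := ⟨K1-(t+1), by omega⟩
        rw [show m+1-2*(t+1) = M from by omega,
          show m+1+1-2*(t+1) = M+1 from by omega,
          show m+1+1-2*(t+1+1) = M-1 from by omega,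
          show m+1+2-2*(t+1+1) = M from by omega,
          show K1+1-(t+1) = i+1 from by omega,
          show K1+1-(t+1+1) = i from by omega,
          show K1-(t+1) = i from by omega,
          show m+1+1-(K1+1) = M+(t+1)-i from by omega,
          show K1+1 = i+1+(t+1) from by omega,
          show K1 = t+1+i from hi,
          choose_two_succ i]
        linear_combination (X ^ (i*(t+1) + i.choose 2 + (t+1) + i) * a m (t+1)) * key' M i (t+1)
      · rw [ha0 m (t+1) hm1 (Or.inr (by omega))]
        ring
    · rw [Nat.sub_self]
      norm_num [qbinom_zero_right]
end

section
/- For every n ≥ 1, the quotient A_{2n}(t,q)/(1+tq^n) is a polynomial in t and q with nonnegative integer coefficients. -/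
namespace QECarlitz

open Polynomial PowerSeries Finset

abbrev R := Polynomial ℤ

noncomputable def qq : R := Polynomial.X

lemma qint_zero : qint 0 = 0 := by simp [qint]

lemma qint_one : qint 1 = 1 := by simp [qint]

lemma one_sub_mul_qint (n : ℕ) : (1 - qq) * qint n = 1 - qq ^ n := by
  unfold qint qq
  linear_combination (-1 : Polynomial ℤ) * geom_sum_mul (Polynomial.X : Polynomial ℤ) n

noncomputable def gam : ℕ → ℕ → R
  | 0, 0 => 1
  | 0, _+1 => 0
  | m+1, 0 => gam m 0
  | m+1, k+1 => qint (k+2) * gam m (k+1)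
      + qq^(k+1) * (1 + qq^(k+1)) * qint (m - (2*k+1)) * gam m k

lemma gam_vanish : ∀ m k, m ≤ 2 * k → 0 < k → gam m k = 0
  | 0, k+1, _, _ => rfl
  | m+1, k+1, h, _ => by
      have h1 : gam m (k+1) = 0 := gam_vanish m (k+1) (by omega) (by omega)
      have h2 : m - (2*k+1) = 0 := by omega
      rw [gam, h1, h2, qint_zero]
      ring

noncomputable def Bp (m k : ℕ) : Polynomial R :=
  Polynomial.X ^ k *
    ∏ i ∈ Finset.Icc (k+1) (m-1-k), (1 + Polynomial.C (qq^i) * Polynomial.X)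

noncomputable def Bsc (m k : ℕ) : Polynomial R :=
  Polynomial.C (qq^k) * Polynomial.X ^ k *
    ∏ i ∈ Finset.Icc (k+1) (m-1-k), (1 + Polynomial.C (qq^(i+1)) * Polynomial.X)

noncomputable def Gp (m : ℕ) : Polynomial R :=
  ∑ k ∈ Finset.range (m+1), Polynomial.C (gam m k) * Bp m k

noncomputable def Gsc (m : ℕ) : Polynomial R :=
  ∑ k ∈ Finset.range (m+1), Polynomial.C (gam m k) * Bsc m k

/-- positivity predicates -/
def PosQ (a : R) : Prop := ∀ j, 0 ≤ a.coeff j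

def PosT (p : Polynomial R) : Prop := ∀ i j, 0 ≤ (p.coeff i).coeff j

lemma posQ_zero : PosQ 0 := fun j => by simp

lemma posQ_one : PosQ 1 := fun j => by
  rw [Polynomial.coeff_one]
  split_ifs <;> norm_num

lemma posQ_add {a b : R} (ha : PosQ a) (hb : PosQ b) : PosQ (a + b) := fun j => by
  rw [Polynomial.coeff_add]; exact add_nonneg (ha j) (hb j)

lemma posQ_mul {a b : R} (ha : PosQ a) (hb : PosQ b) : PosQ (a * b) := fun j => by
  rw [Polynomial.coeff_mul]
  exact Finset.sum_nonneg fun x _ => mul_nonneg (ha _) (hb _)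

lemma posQ_X_pow (i : ℕ) : PosQ (qq ^ i) := fun j => by
  rw [qq, Polynomial.coeff_X_pow]
  split_ifs <;> norm_num

lemma posQ_qint (m : ℕ) : PosQ (qint m) := fun j => by
  rw [qint, Polynomial.finset_sum_coeff]
  refine Finset.sum_nonneg fun i _ => ?_
  rw [Polynomial.coeff_X_pow]
  split_ifs <;> norm_num

lemma posQ_gam : ∀ m k, PosQ (gam m k)
  | 0, 0 => posQ_one
  | 0, _+1 => posQ_zero
  | m+1, 0 => by rw [gam]; exact posQ_gam m 0
  | m+1, k+1 => by
      rw [gam]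
      exact posQ_add
        (posQ_mul (posQ_qint _) (posQ_gam m (k+1)))
        (posQ_mul (posQ_mul (posQ_mul (posQ_X_pow _)
          (posQ_add posQ_one (posQ_X_pow _))) (posQ_qint _)) (posQ_gam m k))

lemma posT_C {a : R} (h : PosQ a) : PosT (Polynomial.C a) := fun i j => by
  rw [Polynomial.coeff_C]
  split_ifs
  · exact h j
  · simp

lemma posT_one : PosT 1 := by
  have := posT_C posQ_one
  rwa [map_one] at this

lemma posT_add {p r : Polynomial R} (hp : PosT p) (hr : PosT r) : PosT (p + r) := fun i j => by
  rw [Polynomial.coeff_add, Polynomial.coeff_add]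
  exact add_nonneg (hp i j) (hr i j)

lemma posT_mul {p r : Polynomial R} (hp : PosT p) (hr : PosT r) : PosT (p * r) := fun i j => by
  rw [Polynomial.coeff_mul, Polynomial.finset_sum_coeff]
  refine Finset.sum_nonneg fun x _ => ?_
  rw [Polynomial.coeff_mul]
  exact Finset.sum_nonneg fun y _ => mul_nonneg (hp _ _) (hr _ _)

lemma posT_prod {ι : Type*} {s : Finset ι} {f : ι → Polynomial R}
    (h : ∀ i ∈ s, PosT (f i)) : PosT (∏ i ∈ s, f i) :=
  Finset.prod_induction f PosT (fun _ _ => posT_mul) posT_one h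

lemma posT_sum {ι : Type*} {s : Finset ι} {f : ι → Polynomial R}
    (h : ∀ i ∈ s, PosT (f i)) : PosT (∑ i ∈ s, f i) := fun i j => by
  rw [Polynomial.finset_sum_coeff, Polynomial.finset_sum_coeff]
  exact Finset.sum_nonneg fun x hx => h x hx i j

lemma posT_X : PosT (Polynomial.X : Polynomial R) := fun i j => by
  rw [Polynomial.coeff_X]
  split_ifs
  · exact posQ_one j
  · simp

lemma posT_X_pow (k : ℕ) : PosT ((Polynomial.X : Polynomial R) ^ k) := by
  induction k with
  | zero => simpa using posT_one
  | succ n ih => rw [pow_succ]; exact posT_mul ih posT_X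


/-! ## Power series side -/

noncomputable def Sm (m : ℕ) : PowerSeries R := PowerSeries.mk fun j => (qint (j+1))^m

noncomputable def Pr (m : ℕ) : PowerSeries R :=
  ∏ i ∈ Finset.range (m+1), (1 - PowerSeries.C (qq^i) * PowerSeries.X)

lemma rescale_C (a r : R) : rescale a (PowerSeries.C r) = PowerSeries.C r := by
  apply PowerSeries.ext; intro n
  rw [PowerSeries.coeff_rescale]
  rcases n with _ | n
  · simp
  · simp [PowerSeries.coeff_C]

lemma one_sub_C_ne : (1 - PowerSeries.C qq) ≠ 0 := by
  rw [sub_ne_zero]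
  intro h
  have h0 := congrArg (PowerSeries.constantCoeff) h
  simp only [map_one, PowerSeries.constantCoeff_C] at h0
  have h1 := congrArg (fun p : R => p.coeff 1) h0
  simp [qq, Polynomial.coeff_one] at h1

lemma e1 (m : ℕ) : (1 - PowerSeries.C qq) * Sm (m+1)
    = Sm m - PowerSeries.C qq * rescale qq (Sm m) := by
  unfold Sm
  rw [rescale_mk]
  apply PowerSeries.ext; intro j
  rw [sub_mul, one_mul]
  simp only [map_sub, PowerSeries.coeff_C_mul, PowerSeries.coeff_mk]
  linear_combination (qint (j+1))^m * one_sub_mul_qint (j+1)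

lemma e2 (m : ℕ) : Pr (m+1) = Pr m * (1 - PowerSeries.C (qq^(m+1)) * PowerSeries.X) := by
  unfold Pr
  rw [Finset.prod_range_succ]

lemma rescale_factor (i : ℕ) :
    rescale qq (1 - PowerSeries.C (qq^i) * PowerSeries.X)
      = 1 - PowerSeries.C (qq^(i+1)) * PowerSeries.X := by
  rw [map_sub, map_one, map_mul, rescale_C, PowerSeries.rescale_X, ← mul_assoc,
    ← map_mul, ← pow_succ]

lemma e3 (m : ℕ) : Pr (m+1) = (1 - PowerSeries.X) * rescale qq (Pr m) := by
  unfold Pr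
  rw [Finset.prod_range_succ']
  rw [map_prod]
  have h0 : (1 : PowerSeries R) - PowerSeries.C (qq^0) * PowerSeries.X
      = 1 - PowerSeries.X := by
    rw [pow_zero, map_one, one_mul]
  rw [h0, mul_comm]
  congr 1
  exact Finset.prod_congr rfl fun i _ => (rescale_factor i).symm


/-! ## Coercion lemmas -/

lemma coe_prod {ι : Type*} (s : Finset ι) (f : ι → Polynomial R) :
    ((∏ i ∈ s, f i : Polynomial R) : PowerSeries R)
      = ∏ i ∈ s, ((f i : Polynomial R) : PowerSeries R) := by
  rw [← Polynomial.coeToPowerSeries.ringHom_apply, map_prod]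
  simp [Polynomial.coeToPowerSeries.ringHom_apply]

lemma coe_sum {ι : Type*} (s : Finset ι) (f : ι → Polynomial R) :
    ((∑ i ∈ s, f i : Polynomial R) : PowerSeries R)
      = ∑ i ∈ s, ((f i : Polynomial R) : PowerSeries R) := by
  rw [← Polynomial.coeToPowerSeries.ringHom_apply, map_sum]
  simp [Polynomial.coeToPowerSeries.ringHom_apply]

lemma coe_Bp (m k : ℕ) : ((Bp m k : Polynomial R) : PowerSeries R)
    = PowerSeries.X ^ k * ∏ i ∈ Finset.Icc (k+1) (m-1-k),
        (1 + PowerSeries.C (qq^i) * PowerSeries.X) := by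
  rw [Bp, Polynomial.coe_mul, Polynomial.coe_pow, Polynomial.coe_X, coe_prod]
  congr 1
  refine Finset.prod_congr rfl fun i _ => ?_
  rw [Polynomial.coe_add, Polynomial.coe_one, Polynomial.coe_mul, Polynomial.coe_C,
    Polynomial.coe_X]

lemma coe_Bsc (m k : ℕ) : ((Bsc m k : Polynomial R) : PowerSeries R)
    = PowerSeries.C (qq^k) * PowerSeries.X ^ k * ∏ i ∈ Finset.Icc (k+1) (m-1-k),
        (1 + PowerSeries.C (qq^(i+1)) * PowerSeries.X) := by
  rw [Bsc, Polynomial.coe_mul, Polynomial.coe_mul, Polynomial.coe_C, Polynomial.coe_pow,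
    Polynomial.coe_X, coe_prod]
  congr 1
  refine Finset.prod_congr rfl fun i _ => ?_
  rw [Polynomial.coe_add, Polynomial.coe_one, Polynomial.coe_mul, Polynomial.coe_C,
    Polynomial.coe_X]

lemma rescale_coe_Bp (m k : ℕ) :
    rescale qq ((Bp m k : Polynomial R) : PowerSeries R) = ((Bsc m k : Polynomial R) : PowerSeries R) := by
  rw [coe_Bp, coe_Bsc, map_mul, map_pow, map_prod, PowerSeries.rescale_X]
  have h1 : (PowerSeries.C qq * PowerSeries.X)^k
      = PowerSeries.C (qq^k) * PowerSeries.X^k := by rw [mul_pow, ← map_pow]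
  rw [h1]
  congr 1
  refine Finset.prod_congr rfl fun i _ => ?_
  rw [map_add, map_one, map_mul, rescale_C, PowerSeries.rescale_X, ← mul_assoc,
    ← map_mul, ← pow_succ]

lemma rescale_coe_Gp (m : ℕ) :
    rescale qq ((Gp m : Polynomial R) : PowerSeries R) = ((Gsc m : Polynomial R) : PowerSeries R) := by
  rw [Gp, Gsc, coe_sum, coe_sum, map_sum]
  refine Finset.sum_congr rfl fun k _ => ?_
  rw [Polynomial.coe_mul, Polynomial.coe_mul, map_mul, Polynomial.coe_C, rescale_C,
    rescale_coe_Bp]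

/-! ## Base case -/

lemma M1_base : Sm 0 * Pr 0 = ((Gp 0 : Polynomial R) : PowerSeries R) := by
  have hP : Pr 0 = 1 - PowerSeries.X := by
    unfold Pr
    rw [Finset.prod_range_one, pow_zero, map_one, one_mul]
  have hS : Sm 0 = PowerSeries.mk fun _ => (1:R) := by unfold Sm; simp
  have hG : Gp 0 = 1 := by
    unfold Gp Bp
    rw [Finset.sum_range_one]
    rw [show Finset.Icc 1 (0-1-0) = (∅ : Finset ℕ) from Finset.Icc_eq_empty (by omega)]
    simp [gam]
  rw [hP, hS, hG, Polynomial.coe_one]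
  apply PowerSeries.ext; intro n
  rw [mul_sub, mul_one]
  rcases n with _ | n
  · simp
  · simp [PowerSeries.coeff_succ_mul_X]


/-! ## The key per-element identity -/

lemma Cgeom (n : ℕ) : (1 - Polynomial.C qq) * Polynomial.C (qint n)
    = 1 - (Polynomial.C (qq : R))^n := by
  have h := congrArg (Polynomial.C : R →+* Polynomial R) (one_sub_mul_qint n)
  simpa only [map_mul, map_sub, map_one, map_pow] using h

/-- the `m = 0, k = 0` case -/
lemma E00 :
    (1 - Polynomial.C (qq^(0+1)) * Polynomial.X) * Bp 0 0
      - Polynomial.C qq * (1 - Polynomial.X) * Bsc 0 0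
    = (1 - Polynomial.C qq) *
        (Polynomial.C (qint (0+1)) * Bp (0+1) 0
          + Polynomial.C (qq^(0+1) * (1 + qq^(0+1)) * qint (0 - (2*0+1))) * Bp (0+1) (0+1)) := by
  have hIcc : ∀ a : ℕ, Finset.Icc (a+1) 0 = (∅ : Finset ℕ) := fun a => Finset.Icc_eq_empty (by omega)
  rw [Bp, Bp, Bp, Bsc]
  norm_num
  rw [qint_one, qint_zero, map_one, map_zero]
  ring

/-- the generic case `2k+1 ≤ m` -/
lemma Egen {m k : ℕ} (h : 2*k+1 ≤ m) :
    (1 - Polynomial.C (qq^(m+1)) * Polynomial.X) * Bp m k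
      - Polynomial.C qq * (1 - Polynomial.X) * Bsc m k
    = (1 - Polynomial.C qq) *
        (Polynomial.C (qint (k+1)) * Bp (m+1) k
          + Polynomial.C (qq^(k+1) * (1 + qq^(k+1)) * qint (m - (2*k+1))) * Bp (m+1) (k+1)) := by
  rcases eq_or_lt_of_le h with heq | hlt
  · -- m = 2k+1
    subst heq
    have h1 : 2*k+1-1-k = k := by omega
    have h2 : 2*k+1+1-1-k = k+1 := by omega
    have h3 : 2*k+1+1-1-(k+1) = k := by omega
    have h4 : 2*k+1 - (2*k+1) = 0 := by omega
    rw [Bp, Bp, Bp, Bsc, h1, h2, h3, h4]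
    rw [show Finset.Icc (k+1) k = (∅ : Finset ℕ) from Finset.Icc_eq_empty (by omega)]
    rw [show Finset.Icc (k+2) k = (∅ : Finset ℕ) from Finset.Icc_eq_empty (by omega)]
    rw [Finset.Icc_self, Finset.prod_singleton, Finset.prod_empty, qint_zero]
    have hg := Cgeom (k+1)
    simp only [map_pow, map_zero, mul_zero, zero_mul, map_mul]
    linear_combination (-((Polynomial.X:Polynomial R)^k * (1 + (Polynomial.C (qq:R))^(k+1) * Polynomial.X))) * hg
  · -- m ≥ 2k+2
    obtain ⟨d, hd⟩ : ∃ d, m = 2*k+2+d := ⟨m - (2*k+2), by omega⟩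
    subst hd
    set c : Polynomial R := Polynomial.C qq with hc
    have h1 : 2*k+2+d-1-k = k+d+1 := by omega
    have h2 : 2*k+2+d+1-1-k = k+d+2 := by omega
    have h3 : 2*k+2+d+1-1-(k+1) = k+d+1 := by omega
    have h4 : 2*k+2+d - (2*k+1) = d+1 := by omega
    set Pmid : Polynomial R := ∏ i ∈ Finset.Icc (k+2) (k+d+1),
      (1 + Polynomial.C (qq^i) * Polynomial.X) with hPmid
    have hBp : Bp (2*k+2+d) k
        = Polynomial.X^k * ((1 + Polynomial.C (qq^(k+1)) * Polynomial.X) * Pmid) := by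
      rw [Bp, h1, hPmid, ← Finset.Ico_add_one_right_eq_Icc,
        Finset.prod_eq_prod_Ico_succ_bot (by omega : k+1 < k+d+1+1), Finset.Ico_add_one_right_eq_Icc]
    have hre : (∏ i ∈ Finset.Icc (k+1) (k+d),
        (1 + Polynomial.C (qq^(i+1)) * Polynomial.X)) = Pmid := by
      rw [hPmid, show k+2 = (k+1)+1 from rfl, show k+d+1 = (k+d)+1 from rfl,
        ← Finset.map_add_right_Icc (k+1) (k+d) 1, Finset.prod_map]
      simp
    have hBsc : Bsc (2*k+2+d) k
        = Polynomial.C (qq^k) * Polynomial.X^k *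
            (Pmid * (1 + Polynomial.C (qq^(k+d+2)) * Polynomial.X)) := by
      rw [Bsc, h1, show k+d+1 = (k+d)+1 from rfl,
        Finset.prod_Icc_succ_top (by omega : k+1 ≤ k+d+1), hre]
    have hBp1 : Bp (2*k+2+d+1) k
        = Polynomial.X^k * ((1 + Polynomial.C (qq^(k+1)) * Polynomial.X) *
            (Pmid * (1 + Polynomial.C (qq^(k+d+2)) * Polynomial.X))) := by
      rw [Bp, h2, show k+d+2 = (k+d+1)+1 from rfl,
        Finset.prod_Icc_succ_top (by omega : k+1 ≤ k+d+1+1)]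
      rw [← Finset.Ico_add_one_right_eq_Icc,
        Finset.prod_eq_prod_Ico_succ_bot (by omega : k+1 < k+d+1+1), Finset.Ico_add_one_right_eq_Icc,
        ← hPmid]
      ring
    have hBp2 : Bp (2*k+2+d+1) (k+1) = Polynomial.X^(k+1) * Pmid := by
      rw [Bp, h3, hPmid]
    rw [hBp, hBsc, hBp1, hBp2, h4]
    have hg1 := Cgeom (k+1)
    have hg2 := Cgeom (d+1)
    simp only [map_pow, map_mul, map_add, map_one, ← hc]
    linear_combination (-((1 + c^(k+1) * Polynomial.X) * (1 + c^(k+d+2) * Polynomial.X) *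
        (Polynomial.X^k * Pmid))) * hg1
      - (c^(k+1) * (1 + c^(k+1)) * Polynomial.X * (Polynomial.X^k * Pmid)) * hg2


/-! ## Summation recurrence -/

noncomputable def delta (m : ℕ) : ℕ → R
  | 0 => 0
  | k+1 => qq^(k+1) * (1 + qq^(k+1)) * qint (m - (2*k+1)) * gam m k

lemma gam_succ_eq (m k : ℕ) : gam (m+1) k = qint (k+1) * gam m k + delta m k := by
  cases k with
  | zero => simp [gam, delta, qint_one]
  | succ k => rw [gam, delta]

lemma gam_top (m : ℕ) : gam m (m+1) = 0 := by
  cases m with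
  | zero => rfl
  | succ m => exact gam_vanish _ _ (by omega) (by omega)

lemma M3 (m : ℕ) :
    (1 - Polynomial.C (qq^(m+1)) * Polynomial.X) * Gp m
      - Polynomial.C qq * (1 - Polynomial.X) * Gsc m
    = (1 - Polynomial.C qq) * Gp (m+1) := by
  have hL : (1 - Polynomial.C (qq^(m+1)) * Polynomial.X) * Gp m
      - Polynomial.C qq * (1 - Polynomial.X) * Gsc m
    = ∑ k ∈ Finset.range (m+1), Polynomial.C (gam m k) *
        ((1 - Polynomial.C (qq^(m+1)) * Polynomial.X) * Bp m k
          - Polynomial.C qq * (1 - Polynomial.X) * Bsc m k) := by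
    rw [Gp, Gsc, Finset.mul_sum, Finset.mul_sum, ← Finset.sum_sub_distrib]
    exact Finset.sum_congr rfl fun k _ => by ring
  have hR : (1 - Polynomial.C qq) * Gp (m+1)
      = ∑ k ∈ Finset.range (m+1), Polynomial.C (gam m k) *
          ((1 - Polynomial.C qq) *
            (Polynomial.C (qint (k+1)) * Bp (m+1) k
              + Polynomial.C (qq^(k+1) * (1 + qq^(k+1)) * qint (m - (2*k+1)))
                  * Bp (m+1) (k+1))) := by
    rw [Gp, Finset.mul_sum]
    have hstep : ∀ k ∈ Finset.range (m+2),
        (1 - Polynomial.C qq) * (Polynomial.C (gam (m+1) k) * Bp (m+1) k)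
        = (1 - Polynomial.C qq) * (Polynomial.C (qint (k+1)) * Polynomial.C (gam m k) * Bp (m+1) k)
          + (1 - Polynomial.C qq) * (Polynomial.C (delta m k) * Bp (m+1) k) := by
      intro k _
      rw [gam_succ_eq, map_add, map_mul]
      ring
    rw [Finset.sum_congr rfl hstep, Finset.sum_add_distrib]
    have e1' : (∑ k ∈ Finset.range (m+2),
        (1 - Polynomial.C qq) * (Polynomial.C (qint (k+1)) * Polynomial.C (gam m k) * Bp (m+1) k))
      = ∑ k ∈ Finset.range (m+1),
        (1 - Polynomial.C qq) * (Polynomial.C (qint (k+1)) * Polynomial.C (gam m k) * Bp (m+1) k) := by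
      rw [Finset.sum_range_succ, gam_top]
      simp
    have e2' : (∑ k ∈ Finset.range (m+2),
        (1 - Polynomial.C qq) * (Polynomial.C (delta m k) * Bp (m+1) k))
      = ∑ k ∈ Finset.range (m+1),
        (1 - Polynomial.C qq) * (Polynomial.C (delta m (k+1)) * Bp (m+1) (k+1)) := by
      rw [Finset.sum_range_succ']
      simp [delta]
    rw [e1', e2', ← Finset.sum_add_distrib]
    refine Finset.sum_congr rfl fun k _ => ?_
    rw [delta]
    simp only [map_mul]
    ring
  rw [hL, hR]
  refine Finset.sum_congr rfl fun k hk => ?_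
  by_cases hg : gam m k = 0
  · rw [hg, map_zero, zero_mul, zero_mul]
  · refine congrArg (Polynomial.C (gam m k) * ·) ?_
    rcases Nat.eq_zero_or_pos m with hm | hm
    · subst hm
      have hk0 : k = 0 := by
        rcases k with _ | k
        · rfl
        · exact absurd rfl hg
      subst hk0
      exact E00
    · have hmk : 2*k+1 ≤ m := by
        by_contra hcon
        rcases Nat.eq_zero_or_pos k with hk0 | hk0
        · omega
        · exact hg (gam_vanish m k (by omega) hk0)
      exact Egen hmk

/-! ## Main induction -/

lemma M1 : ∀ m, Sm m * Pr m = ((Gp m : Polynomial R) : PowerSeries R) := by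
  intro m
  induction m with
  | zero => exact M1_base
  | succ m ih =>
    apply mul_left_cancel₀ one_sub_C_ne
    calc (1 - PowerSeries.C qq) * (Sm (m+1) * Pr (m+1))
        = ((1 - PowerSeries.C qq) * Sm (m+1)) * Pr (m+1) := by ring
      _ = (Sm m - PowerSeries.C qq * rescale qq (Sm m)) * Pr (m+1) := by rw [e1 m]
      _ = Sm m * Pr (m+1) - PowerSeries.C qq * rescale qq (Sm m) * Pr (m+1) := by ring
      _ = Sm m * (Pr m * (1 - PowerSeries.C (qq^(m+1)) * PowerSeries.X))
          - PowerSeries.C qq * rescale qq (Sm m) * ((1 - PowerSeries.X) * rescale qq (Pr m)) := by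
            rw [← e2 m, ← e3 m]
      _ = (1 - PowerSeries.C (qq^(m+1)) * PowerSeries.X) * (Sm m * Pr m)
          - PowerSeries.C qq * (1 - PowerSeries.X) * rescale qq (Sm m * Pr m) := by
            rw [map_mul]; ring
      _ = (1 - PowerSeries.C (qq^(m+1)) * PowerSeries.X) * ((Gp m : Polynomial R) : PowerSeries R)
          - PowerSeries.C qq * (1 - PowerSeries.X) * ((Gsc m : Polynomial R) : PowerSeries R) := by
            rw [ih, rescale_coe_Gp]
      _ = (((1 - Polynomial.C (qq^(m+1)) * Polynomial.X) * Gp m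
            - Polynomial.C qq * (1 - Polynomial.X) * Gsc m : Polynomial R) : PowerSeries R) := by
            simp only [Polynomial.coe_sub, Polynomial.coe_mul, Polynomial.coe_one,
              Polynomial.coe_C, Polynomial.coe_X]
      _ = (((1 - Polynomial.C qq) * Gp (m+1) : Polynomial R) : PowerSeries R) := by rw [M3 m]
      _ = (1 - PowerSeries.C qq) * ((Gp (m+1) : Polynomial R) : PowerSeries R) := by
            rw [Polynomial.coe_mul, Polynomial.coe_sub, Polynomial.coe_one, Polynomial.coe_C]

/-! ## Factorization and the quotient -/

noncomputable def Pq (n : ℕ) : Polynomial R :=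
  ∑ k ∈ Finset.range (2*n+1), Polynomial.C (gam (2*n) k) *
    (Polynomial.X^k *
      ∏ i ∈ (Finset.Icc (k+1) (2*n-1-k)).erase n, (1 + Polynomial.C (qq^i) * Polynomial.X))

lemma Gp_factor (n : ℕ) (hn : 1 ≤ n) :
    Gp (2*n) = (1 + Polynomial.C (qq^n) * Polynomial.X) * Pq n := by
  rw [Gp, Pq, Finset.mul_sum]
  refine Finset.sum_congr rfl fun k hk => ?_
  by_cases hg : gam (2*n) k = 0
  · simp [hg]
  · have hk2 : 2*k+1 ≤ 2*n := by
      by_contra hcon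
      rcases Nat.eq_zero_or_pos k with h0 | h0
      · omega
      · exact hg (gam_vanish _ _ (by omega) h0)
    have hmem : n ∈ Finset.Icc (k+1) (2*n-1-k) := by
      rw [Finset.mem_Icc]
      omega
    rw [Bp, ← Finset.mul_prod_erase _ _ hmem]
    ring

lemma Pq_pos (n : ℕ) : PosT (Pq n) := by
  apply posT_sum; intro k _
  apply posT_mul
  · exact posT_C (posQ_gam _ _)
  apply posT_mul
  · exact posT_X_pow k
  apply posT_prod; intro i _
  exact posT_add posT_one (posT_mul (posT_C (posQ_X_pow i)) posT_X)

end QECarlitz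

/-- For every `n ≥ 1`, the quotient `A_{2n}(t,q)/(1+tq^n)` is a polynomial
in `t` and `q` with nonnegative integer coefficients, where `A_n(t,q)` are Carlitz's
q-Eulerian polynomials defined by `∑_{j≥0} [j+1]_q^n t^j = A_n(t,q)/(t;q)_{n+1}`. -/
theorem qEulerian_even_div_one_add_tqn
    (A : ℕ → Polynomial (Polynomial ℤ))
    (hA : ∀ n, ((A n : PowerSeries (Polynomial ℤ)) =
      PowerSeries.mk (fun j => (qint (j + 1)) ^ n) *
        ∏ i ∈ Finset.range (n + 1),
          (1 - PowerSeries.C (R := Polynomial ℤ) (Polynomial.X ^ i) * PowerSeries.X)))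
    (n : ℕ) (hn : 1 ≤ n) :
    ∃ P : Polynomial (Polynomial ℤ),
      A (2 * n) = (1 + Polynomial.C ((Polynomial.X : Polynomial ℤ) ^ n) * Polynomial.X) * P ∧
      ∀ i j, 0 ≤ ((P.coeff i).coeff j) := by
  have h2 := QECarlitz.M1 (2*n)
  simp only [QECarlitz.Sm, QECarlitz.Pr, QECarlitz.qq] at h2
  have hA2 : A (2*n) = QECarlitz.Gp (2*n) := by
    rw [← Polynomial.coe_inj, hA (2*n)]
    exact h2
  refine ⟨QECarlitz.Pq n, ?_, QECarlitz.Pq_pos n⟩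
  rw [hA2, QECarlitz.Gp_factor n hn]
  rfl
end

section
/- Let f_n(q) = sum_{k=0}^{2n+1} binom(2n+1,k) (-1)^k / (1+q^{k-n}) (a rational function of q). Then the rational function d_n(q) = (-1)^{n+1}(-1;q)_{n+2} f_n(q) / (1-q)^{2n+1} is a polynomial with integer coefficients; equivalently, q = 1 is a zero of order at least 2n+1 of the polynomial (-1)^{n+1}(-1;q)_{n+2} f_n(q). -/
/-- The natural inclusion of `ℤ[q]` into the field `ℚ(q)` of rational functions. -/
noncomputable def toRat : Polynomial ℤ →+* RatFunc ℚ :=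
  (algebraMap (Polynomial ℚ) (RatFunc ℚ)).comp (Polynomial.mapRingHom (Int.castRingHom ℚ))

namespace Dbl
open Polynomial Finset

noncomputable abbrev alg : Polynomial ℚ →+* RatFunc ℚ := algebraMap (Polynomial ℚ) (RatFunc ℚ)

lemma alg_inj : Function.Injective alg := IsFractionRing.injective _ _

lemma X_ne : (RatFunc.X : RatFunc ℚ) ≠ 0 := RatFunc.X_ne_zero

lemma poly_one_add_pow_ne (m : ℕ) : (1 + Polynomial.X ^ m : Polynomial ℚ) ≠ 0 := by
  intro h
  have := congrArg (Polynomial.eval 1) h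
  simp at this

lemma one_add_pow_ne (m : ℕ) : (1 + RatFunc.X ^ m : RatFunc ℚ) ≠ 0 := by
  have : (1 + RatFunc.X ^ m : RatFunc ℚ) = alg (1 + Polynomial.X ^ m) := by
    simp [map_add, map_pow, RatFunc.algebraMap_X]
  rw [this]
  exact RatFunc.algebraMap_ne_zero (poly_one_add_pow_ne m)

lemma one_add_zpow_ne (j : ℤ) : (1 + RatFunc.X ^ j : RatFunc ℚ) ≠ 0 := by
  rcases j with m | m
  · simpa using one_add_pow_ne m
  · rw [Int.negSucc_eq, zpow_neg]
    intro h
    have hz : (RatFunc.X ^ (((m:ℤ))+1) : RatFunc ℚ) ≠ 0 := zpow_ne_zero _ X_ne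
    have h2 := congrArg (· * (RatFunc.X ^ ((m:ℤ)+1) : RatFunc ℚ)) h
    simp only [add_mul, one_mul, inv_mul_cancel₀ hz, zero_mul] at h2
    have h3 : (RatFunc.X ^ ((m:ℤ)+1) : RatFunc ℚ) = RatFunc.X ^ (m+1) := by
      rw [← zpow_natCast]; push_cast; ring_nf
    rw [h3] at h2
    exact one_add_pow_ne (m+1) (by linear_combination h2)

/-- `x` vanishes to order at least `m` at `q = 1` (as a rational function). -/
def V (m : ℕ) (x : RatFunc ℚ) : Prop :=
  ∃ N D : Polynomial ℚ, D.eval 1 ≠ 0 ∧ x * alg D = alg ((Polynomial.X - 1) ^ m * N)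

lemma V_cast {m m' : ℕ} {x : RatFunc ℚ} (h : m = m') (hx : V m x) : V m' x := h ▸ hx

lemma V_add {m : ℕ} {x y : RatFunc ℚ} (hx : V m x) (hy : V m y) : V m (x + y) := by
  obtain ⟨N1, D1, e1, h1⟩ := hx
  obtain ⟨N2, D2, e2, h2⟩ := hy
  refine ⟨N1 * D2 + N2 * D1, D1 * D2, by simp [e1, e2], ?_⟩
  have : (x + y) * alg (D1 * D2) = (x * alg D1) * alg D2 + (y * alg D2) * alg D1 := by
    simp [map_mul]; ring
  rw [this, h1, h2, ← map_mul, ← map_mul, ← map_add]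
  congr 1; ring

lemma V_neg {m : ℕ} {x : RatFunc ℚ} (hx : V m x) : V m (-x) := by
  obtain ⟨N, D, e, h⟩ := hx
  exact ⟨-N, D, e, by rw [neg_mul, h, ← map_neg]; congr 1; ring⟩

lemma V_mul {m k : ℕ} {x y : RatFunc ℚ} (hx : V m x) (hy : V k y) : V (m + k) (x * y) := by
  obtain ⟨N1, D1, e1, h1⟩ := hx
  obtain ⟨N2, D2, e2, h2⟩ := hy
  refine ⟨N1 * N2, D1 * D2, by simp [e1, e2], ?_⟩
  have : (x * y) * alg (D1 * D2) = (x * alg D1) * (y * alg D2) := by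
    simp [map_mul]; ring
  rw [this, h1, h2, ← map_mul]
  congr 1; ring

lemma V_ofPoly (p : Polynomial ℚ) : V 0 (alg p) :=
  ⟨p, 1, by simp, by simp⟩

lemma V_t : V 1 (RatFunc.X - 1) :=
  ⟨1, 1, by simp, by simp [RatFunc.algebraMap_X]⟩

lemma V_X_zpow (j : ℤ) : V 0 (RatFunc.X ^ j) := by
  rcases j with m | m
  · refine ⟨Polynomial.X ^ m, 1, by simp, ?_⟩
    simp only [Int.ofNat_eq_coe, zpow_natCast]
    simp [map_pow, RatFunc.algebraMap_X]
  · rw [Int.negSucc_eq, zpow_neg]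
    refine ⟨1, Polynomial.X ^ (m + 1), by simp, ?_⟩
    have hz : (RatFunc.X ^ (((m:ℤ))+1) : RatFunc ℚ) ≠ 0 := zpow_ne_zero _ X_ne
    have h3 : alg (Polynomial.X ^ (m+1)) = RatFunc.X ^ ((m:ℤ)+1) := by
      rw [map_pow, RatFunc.algebraMap_X, ← zpow_natCast]; push_cast; ring_nf
    rw [h3, inv_mul_cancel₀ hz]; simp

lemma V_h (j : ℤ) : V 0 ((1 + RatFunc.X ^ j : RatFunc ℚ)⁻¹) := by
  rcases j with m | m
  · refine ⟨1, 1 + Polynomial.X ^ m, by simp, ?_⟩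
    simp only [Int.ofNat_eq_coe, zpow_natCast]
    have hD : alg (1 + Polynomial.X ^ m) = 1 + RatFunc.X ^ m := by
      simp [map_add, map_pow, RatFunc.algebraMap_X]
    rw [hD, inv_mul_cancel₀ (one_add_pow_ne m)]; simp
  · rw [Int.negSucc_eq, zpow_neg]
    refine ⟨Polynomial.X ^ (m+1), 1 + Polynomial.X ^ (m+1), by simp, ?_⟩
    have hz : (RatFunc.X ^ (((m:ℤ))+1) : RatFunc ℚ) ≠ 0 := zpow_ne_zero _ X_ne
    have hne : (1 + (RatFunc.X ^ ((m:ℤ)+1) : RatFunc ℚ)⁻¹) ≠ 0 := by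
      have := one_add_zpow_ne (-((m:ℤ)+1))
      rwa [zpow_neg] at this
    have hX : alg (Polynomial.X ^ (m+1)) = RatFunc.X ^ ((m:ℤ)+1) := by
      rw [map_pow, RatFunc.algebraMap_X, ← zpow_natCast]; push_cast; ring_nf
    have hD : alg (1 + Polynomial.X ^ (m+1)) = 1 + RatFunc.X ^ ((m:ℤ)+1) := by
      rw [map_add, map_one, hX]
    rw [hD, pow_zero, one_mul, hX]
    have key : (1 + (RatFunc.X ^ ((m:ℤ)+1) : RatFunc ℚ)⁻¹)
        = (1 + RatFunc.X ^ ((m:ℤ)+1)) / RatFunc.X ^ ((m:ℤ)+1) := by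
      field_simp
      ring
    rw [key, inv_div, div_mul_cancel₀ _ (one_add_zpow_ne ((m:ℤ)+1))]


inductive InA : (ℤ → RatFunc ℚ) → Prop
  | genX (c : ℤ) : InA (fun j => RatFunc.X ^ (j + c))
  | genH (c : ℤ) : InA (fun j => (1 + RatFunc.X ^ (j + c))⁻¹)
  | add {u v} : InA u → InA v → InA (fun j => u j + v j)
  | mul {u v} : InA u → InA v → InA (fun j => u j * v j)
  | neg {u} : InA u → InA (fun j => - u j)

lemma InA.shift {u} (h : InA u) : InA (fun j => u (j + 1)) := by
  induction h with
  | genX c =>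
      have : (fun j : ℤ => (RatFunc.X : RatFunc ℚ) ^ (j + 1 + c)) = fun j : ℤ => (RatFunc.X : RatFunc ℚ) ^ (j + (c + 1)) := by
        funext j; congr 1; omega
      exact this ▸ InA.genX (c + 1)
  | genH c =>
      have : (fun j : ℤ => (1 + RatFunc.X ^ (j + 1 + c) : RatFunc ℚ)⁻¹)
          = fun j : ℤ => (1 + RatFunc.X ^ (j + (c + 1)) : RatFunc ℚ)⁻¹ := by
        funext j; rw [show j + 1 + c = j + (c + 1) by omega]
      exact this ▸ InA.genH (c + 1)
  | add _ _ ih1 ih2 => exact InA.add ih1 ih2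
  | mul _ _ ih1 ih2 => exact InA.mul ih1 ih2
  | neg _ ih => exact InA.neg ih

lemma InA.val {u} (h : InA u) : ∀ j, V 0 (u j) := by
  induction h with
  | genX c => exact fun j => V_X_zpow _
  | genH c => exact fun j => V_h _
  | add _ _ ih1 ih2 => exact fun j => V_add (ih1 j) (ih2 j)
  | mul _ _ ih1 ih2 => exact fun j => V_cast (by omega) (V_mul (ih1 j) (ih2 j))
  | neg _ ih => exact fun j => V_neg (ih j)

lemma InA.delta {u} (h : InA u) :
    ∃ v, InA v ∧ ∀ j, u (j + 1) - u j = (RatFunc.X - 1) * v j := by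
  induction h with
  | genX c =>
      refine ⟨_, InA.genX c, fun j => ?_⟩
      have h1 : (RatFunc.X : RatFunc ℚ) ^ (j + 1 + c) = RatFunc.X ^ (j + c) * RatFunc.X := by
        rw [← zpow_add_one₀ X_ne]; congr 1; omega
      show RatFunc.X ^ (j + 1 + c) - RatFunc.X ^ (j + c) = _
      rw [h1]; ring
  | genH c =>
      refine ⟨fun j => -(RatFunc.X ^ (j + c) * (1 + RatFunc.X ^ (j + c))⁻¹ *
          (1 + RatFunc.X ^ (j + c + 1))⁻¹), ?_, fun j => ?_⟩
      · refine InA.neg (InA.mul (InA.mul (InA.genX c) (InA.genH c)) ?_)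
        have : (fun j : ℤ => (1 + RatFunc.X ^ (j + c + 1) : RatFunc ℚ)⁻¹)
            = fun j : ℤ => (1 + RatFunc.X ^ (j + (c + 1)) : RatFunc ℚ)⁻¹ := by
          funext j; rw [show j + c + 1 = j + (c + 1) by omega]
        exact this ▸ InA.genH (c + 1)
      · show (1 + RatFunc.X ^ (j + 1 + c))⁻¹ - (1 + RatFunc.X ^ (j + c))⁻¹ = _
        rw [show j + 1 + c = j + c + 1 by omega]
        have h1 : (RatFunc.X : RatFunc ℚ) ^ (j + c + 1) = RatFunc.X ^ (j + c) * RatFunc.X := by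
          rw [← zpow_add_one₀ X_ne]
        have n1 := one_add_zpow_ne (j + c)
        have n2 := one_add_zpow_ne (j + c + 1)
        field_simp
        rw [h1]; ring
  | @add u w hu hw ih1 ih2 =>
      obtain ⟨v1, hv1, e1⟩ := ih1
      obtain ⟨v2, hv2, e2⟩ := ih2
      refine ⟨fun j => v1 j + v2 j, InA.add hv1 hv2, fun j => ?_⟩
      show (u (j+1) + w (j+1)) - (u j + w j) = _
      linear_combination e1 j + e2 j
  | @mul u w hu hw ih1 ih2 =>
      obtain ⟨v1, hv1, e1⟩ := ih1
      obtain ⟨v2, hv2, e2⟩ := ih2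
      refine ⟨fun j => u (j + 1) * v2 j + v1 j * w j, InA.add (InA.mul hu.shift hv2)
        (InA.mul hv1 hw), fun j => ?_⟩
      have key : u (j+1) * w (j+1) - u j * w j
          = u (j+1) * (w (j+1) - w j) + (u (j+1) - u j) * w j := by ring
      rw [key, e1 j, e2 j]; ring
  | @neg u hu ih =>
      obtain ⟨v, hv, e⟩ := ih
      refine ⟨fun j => -v j, InA.neg hv, fun j => ?_⟩
      show (-u (j+1)) - (-u j) = _
      linear_combination -(e j)


lemma pascal (m : ℕ) (w : ℤ → RatFunc ℚ) (j : ℤ) :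
    ∑ k ∈ range (m + 2), ((m + 1).choose k : RatFunc ℚ) * (-1) ^ k * w (j + k)
      = ∑ k ∈ range (m + 1), (m.choose k : RatFunc ℚ) * (-1) ^ k * (w (j + k) - w (j + k + 1)) := by
  rw [Finset.sum_range_succ']
  have hL : ∀ k, (((m + 1).choose (k + 1) : RatFunc ℚ)) * (-1) ^ (k + 1) * w (j + (k + 1 : ℕ))
      = -((m.choose k : RatFunc ℚ) * (-1) ^ k * w (j + k + 1))
        - ((m.choose (k + 1) : RatFunc ℚ) * (-1) ^ k * w (j + k + 1)) := by
    intro k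
    have : ((m + 1).choose (k + 1) : RatFunc ℚ) = (m.choose k : RatFunc ℚ) + m.choose (k + 1) := by
      rw [Nat.choose_succ_succ]; push_cast; ring
    rw [this, show (j + (k + 1 : ℕ) : ℤ) = j + k + 1 by push_cast; ring]
    ring
  rw [Finset.sum_congr rfl fun k _ => hL k]
  -- RHS manipulation
  have hR : ∑ k ∈ range (m + 1), (m.choose k : RatFunc ℚ) * (-1) ^ k * (w (j + k) - w (j + k + 1))
      = ∑ k ∈ range (m + 1), (m.choose k : RatFunc ℚ) * (-1) ^ k * w (j + k)
        - ∑ k ∈ range (m + 1), (m.choose k : RatFunc ℚ) * (-1) ^ k * w (j + k + 1) := by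
    rw [← Finset.sum_sub_distrib]
    exact Finset.sum_congr rfl fun k _ => by ring
  rw [hR]
  -- first sum on RHS : peel off k = 0
  rw [Finset.sum_range_succ' (fun k => (m.choose k : RatFunc ℚ) * (-1) ^ k * w (j + k)) m]
  -- extend to m+1 terms using choose m (m+1) = 0
  have hext : ∑ k ∈ range m, (m.choose (k + 1) : RatFunc ℚ) * (-1) ^ (k + 1) * w (j + (k + 1 : ℕ))
      = ∑ k ∈ range (m + 1), (m.choose (k + 1) : RatFunc ℚ) * (-1) ^ (k + 1) * w (j + (k + 1 : ℕ)) := by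
    rw [Finset.sum_range_succ, Nat.choose_succ_self]
    simp
  rw [hext]
  rw [Finset.sum_sub_distrib]
  have h2 : ∀ k ∈ range (m + 1),
      (m.choose (k + 1) : RatFunc ℚ) * (-1) ^ (k + 1) * w (j + (k + 1 : ℕ))
      = -((m.choose (k + 1) : RatFunc ℚ) * (-1) ^ k * w (j + k + 1)) := by
    intro k _
    rw [show (j + (k + 1 : ℕ) : ℤ) = j + k + 1 by push_cast; ring]
    ring
  rw [Finset.sum_congr rfl h2]
  simp only [Finset.sum_neg_distrib, Nat.choose_zero_right, Nat.cast_one, pow_zero,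
    Nat.cast_zero]
  ring

lemma main (m : ℕ) : ∀ u, InA u → ∀ j : ℤ,
    V m (∑ k ∈ range (m + 1), (m.choose k : RatFunc ℚ) * (-1) ^ k * u (j + k)) := by
  induction m with
  | zero =>
      intro u hu j
      simpa using hu.val j
  | succ m ih =>
      intro u hu j
      obtain ⟨v, hv, e⟩ := hu.delta
      have hp := pascal m u j
      have h3 : ∀ k ∈ range (m + 1), (m.choose k : RatFunc ℚ) * (-1) ^ k * (u (j + k) - u (j + k + 1))
          = (RatFunc.X - 1) * (-((m.choose k : RatFunc ℚ) * (-1) ^ k * v (j + k))) := by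
        intro k _
        rw [show u (j + k) - u (j + k + 1) = -((RatFunc.X - 1) * v (j + k)) by
          linear_combination -(e (j + k))]
        ring
      rw [show m + 1 + 1 = m + 2 from rfl, hp, Finset.sum_congr rfl h3, ← Finset.mul_sum,
        Finset.sum_neg_distrib]
      exact V_cast (by omega) (V_mul V_t (V_neg (ih v hv j)))


lemma toRat_apply (p : Polynomial ℤ) : toRat p = alg (p.map (Int.castRingHom ℚ)) := rfl

lemma toRat_one_add_pow (i : ℕ) :
    toRat (1 + Polynomial.X ^ i) = 1 + RatFunc.X ^ i := by
  rw [toRat_apply]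
  simp [Polynomial.map_add, Polynomial.map_pow, RatFunc.algebraMap_X]

lemma neg_zpow_inv (m : ℕ) :
    ((1 + RatFunc.X ^ (-(m:ℤ)) : RatFunc ℚ))⁻¹ = RatFunc.X ^ m * (1 + RatFunc.X ^ m)⁻¹ := by
  rcases Nat.eq_zero_or_pos m with h | h
  · subst h; simp
  rw [zpow_neg, zpow_natCast]
  have hz : (RatFunc.X ^ m : RatFunc ℚ) ≠ 0 := pow_ne_zero _ X_ne
  have key : (1 + ((RatFunc.X : RatFunc ℚ) ^ m)⁻¹) = (1 + RatFunc.X ^ m) / RatFunc.X ^ m := by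
    field_simp; ring
  rw [key, inv_div, div_eq_mul_inv, mul_comm]

lemma term_in_range (n k : ℕ) (hk : k < 2 * n + 2) :
    ∃ g : Polynomial ℤ,
      (∏ i ∈ Finset.range (n + 2), (1 + RatFunc.X ^ i : RatFunc ℚ)) *
        (1 + RatFunc.X ^ ((k : ℤ) - (n : ℤ)))⁻¹ = toRat g := by
  by_cases hkn : n ≤ k
  · set e := k - n with he
    have hee : ((k : ℤ) - (n : ℤ)) = (e : ℤ) := by omega
    have hmem : e ∈ Finset.range (n + 2) := Finset.mem_range.mpr (by omega)
    refine ⟨∏ i ∈ (Finset.range (n + 2)).erase e, (1 + Polynomial.X ^ i), ?_⟩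
    rw [hee, zpow_natCast, ← Finset.mul_prod_erase _ _ hmem]
    rw [show (1 + RatFunc.X ^ e : RatFunc ℚ) * (∏ i ∈ (Finset.range (n+2)).erase e, (1 + RatFunc.X ^ i))
        * (1 + RatFunc.X ^ e)⁻¹
        = ((1 + RatFunc.X ^ e) * (1 + RatFunc.X ^ e)⁻¹) * ∏ i ∈ (Finset.range (n+2)).erase e, (1 + RatFunc.X ^ i)
        by ring, mul_inv_cancel₀ (one_add_pow_ne e), one_mul]
    rw [map_prod]
    exact (Finset.prod_congr rfl fun i _ => (toRat_one_add_pow i).symm)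
  · push_neg at hkn
    set m := n - k with hm
    have hee : ((k : ℤ) - (n : ℤ)) = -(m : ℤ) := by omega
    have hmem : m ∈ Finset.range (n + 2) := Finset.mem_range.mpr (by omega)
    refine ⟨Polynomial.X ^ m * ∏ i ∈ (Finset.range (n + 2)).erase m, (1 + Polynomial.X ^ i), ?_⟩
    rw [hee, neg_zpow_inv, ← Finset.mul_prod_erase _ _ hmem]
    rw [show (1 + RatFunc.X ^ m : RatFunc ℚ) * (∏ i ∈ (Finset.range (n+2)).erase m, (1 + RatFunc.X ^ i))
        * (RatFunc.X ^ m * (1 + RatFunc.X ^ m)⁻¹)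
        = ((1 + RatFunc.X ^ m) * (1 + RatFunc.X ^ m)⁻¹) * (RatFunc.X ^ m *
          ∏ i ∈ (Finset.range (n+2)).erase m, (1 + RatFunc.X ^ i)) by ring,
      mul_inv_cancel₀ (one_add_pow_ne m), one_mul]
    rw [map_mul, map_prod, map_pow]
    rw [show toRat Polynomial.X = RatFunc.X by rw [toRat_apply]; simp [RatFunc.algebraMap_X]]
    congr 1
    exact (Finset.prod_congr rfl fun i _ => (toRat_one_add_pow i).symm)

lemma clear_denoms (n : ℕ) :
    ∃ g : Polynomial ℤ,
      (∏ i ∈ Finset.range (n + 2), (1 + RatFunc.X ^ i : RatFunc ℚ)) *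
        (∑ k ∈ Finset.range (2 * n + 2),
          ((2 * n + 1).choose k : RatFunc ℚ) * (-1) ^ k /
            (1 + RatFunc.X ^ ((k : ℤ) - (n : ℤ)))) = toRat g := by
  have : (∏ i ∈ Finset.range (n + 2), (1 + RatFunc.X ^ i : RatFunc ℚ)) *
        (∑ k ∈ Finset.range (2 * n + 2),
          ((2 * n + 1).choose k : RatFunc ℚ) * (-1) ^ k /
            (1 + RatFunc.X ^ ((k : ℤ) - (n : ℤ)))) ∈ toRat.range := by
    rw [Finset.mul_sum]
    apply Subring.sum_mem
    intro k hk
    obtain ⟨g, hg⟩ := term_in_range n k (Finset.mem_range.mp hk)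
    rw [show (∏ i ∈ Finset.range (n + 2), (1 + RatFunc.X ^ i : RatFunc ℚ)) *
        (((2 * n + 1).choose k : RatFunc ℚ) * (-1) ^ k / (1 + RatFunc.X ^ ((k : ℤ) - (n : ℤ))))
        = (((2 * n + 1).choose k : RatFunc ℚ) * (-1) ^ k) *
          ((∏ i ∈ Finset.range (n + 2), (1 + RatFunc.X ^ i : RatFunc ℚ)) *
            (1 + RatFunc.X ^ ((k : ℤ) - (n : ℤ)))⁻¹) by rw [div_eq_mul_inv]; ring, hg]
    refine Subring.mul_mem _ ⟨((2 * n + 1).choose k : Polynomial ℤ) * (-1) ^ k, ?_⟩ ⟨g, rfl⟩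
    simp
  obtain ⟨g, hg⟩ := this
  exact ⟨g, hg.symm⟩


lemma V_f (n : ℕ) : V (2 * n + 1) (∑ k ∈ Finset.range (2 * n + 2),
    ((2 * n + 1).choose k : RatFunc ℚ) * (-1) ^ k /
      (1 + RatFunc.X ^ ((k : ℤ) - (n : ℤ)))) := by
  have h := main (2 * n + 1) _ (InA.genH 0) (-(n : ℤ))
  have hcong : ∀ k ∈ Finset.range (2 * n + 1 + 1),
      ((2 * n + 1).choose k : RatFunc ℚ) * (-1) ^ k *
        ((fun j => (1 + RatFunc.X ^ (j + 0) : RatFunc ℚ)⁻¹) (-(n : ℤ) + k))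
      = ((2 * n + 1).choose k : RatFunc ℚ) * (-1) ^ k /
          (1 + RatFunc.X ^ ((k : ℤ) - (n : ℤ))) := by
    intro k _
    show _ * (1 + RatFunc.X ^ (-(n:ℤ) + (k:ℤ) + 0) : RatFunc ℚ)⁻¹ = _
    rw [show -(n:ℤ) + (k:ℤ) + 0 = (k:ℤ) - (n:ℤ) by omega, div_eq_mul_inv]
  rw [Finset.sum_congr rfl hcong] at h
  exact h

end Dbl


open Dbl Polynomial Finset in
/-- Let `f_n(q) = ∑_{k=0}^{2n+1} binom(2n+1,k)(-1)^k/(1+q^{k-n})` as a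
rational function of `q`. Then
`d_n(q) = (-1)^{n+1} (-1;q)_{n+2} f_n(q)/(1-q)^{2n+1}`, where
`(-1;q)_{n+2} = ∏_{i=0}^{n+1}(1+q^i)`, is a polynomial with integer coefficients. -/
theorem doubloon_dn_integral (n : ℕ) :
    ∃ p : Polynomial ℤ,
      ((-1 : RatFunc ℚ) ^ (n + 1) * (∏ i ∈ Finset.range (n + 2), (1 + RatFunc.X ^ i)) *
          (∑ k ∈ Finset.range (2 * n + 2),
            ((2 * n + 1).choose k : RatFunc ℚ) * (-1) ^ k /
              (1 + RatFunc.X ^ ((k : ℤ) - (n : ℤ))))) /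
        (1 - RatFunc.X) ^ (2 * n + 1) = toRat p := by
  obtain ⟨g, hg⟩ := clear_denoms n
  obtain ⟨N, D, hD, hV⟩ := V_f n
  have hP' : (∏ i ∈ Finset.range (n + 2), (1 + RatFunc.X ^ i : RatFunc ℚ))
      = alg (∏ i ∈ Finset.range (n + 2), (1 + Polynomial.X ^ i)) := by
    rw [map_prod]
    exact Finset.prod_congr rfl fun i _ => by simp [RatFunc.algebraMap_X]
  -- the polynomial identity over ℚ
  have key : alg (g.map (Int.castRingHom ℚ) * D)
      = alg ((Polynomial.X - 1) ^ (2 * n + 1) * N *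
          (∏ i ∈ Finset.range (n + 2), (1 + Polynomial.X ^ i))) := by
    rw [map_mul, ← toRat_apply, ← hg, map_mul, map_mul, ← hP', mul_assoc, hV, map_mul]
    ring
  have keyp := alg_inj key
  -- coprimality of (X-1) and D
  have hco : IsCoprime (Polynomial.X - 1 : Polynomial ℚ) D := by
    obtain ⟨Q, hQ⟩ := Polynomial.X_sub_C_dvd_sub_C_eval (a := (1 : ℚ)) (p := D)
    refine ⟨-Q * C (D.eval 1)⁻¹, C (D.eval 1)⁻¹, ?_⟩
    have h1 : (C (D.eval 1)⁻¹ : Polynomial ℚ) * C (D.eval 1) = 1 := by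
      rw [← C_mul, inv_mul_cancel₀ hD, C_1]
    have hQ' : D - C (D.eval 1) = (Polynomial.X - 1) * Q := by
      rw [hQ]; rw [C_1]
    linear_combination (C (D.eval 1)⁻¹) * hQ' + h1
  have hdvd : ((Polynomial.X - 1 : Polynomial ℚ)) ^ (2 * n + 1) ∣ g.map (Int.castRingHom ℚ) :=
    (hco.pow_left).dvd_of_dvd_mul_right ⟨N * ∏ i ∈ Finset.range (n + 2), (1 + Polynomial.X ^ i),
      by rw [keyp]; ring⟩
  have hmonic : ((Polynomial.X - 1 : Polynomial ℤ) ^ (2 * n + 1)).Monic := by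
    have : (Polynomial.X - 1 : Polynomial ℤ) = Polynomial.X - C 1 := by rw [C_1]
    rw [this]
    exact (monic_X_sub_C 1).pow _
  have hdvdZ : ((Polynomial.X - 1 : Polynomial ℤ)) ^ (2 * n + 1) ∣ g := by
    rw [← Polynomial.map_dvd_map (Int.castRingHom ℚ) Int.cast_injective hmonic]
    rwa [Polynomial.map_pow, Polynomial.map_sub, Polynomial.map_X, Polynomial.map_one]
  obtain ⟨p₀, hp₀⟩ := hdvdZ
  refine ⟨(-1) ^ n * p₀, ?_⟩
  have htX : (RatFunc.X - 1 : RatFunc ℚ) ≠ 0 := by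
    have : (RatFunc.X - 1 : RatFunc ℚ) = alg (Polynomial.X - 1) := by
      simp [RatFunc.algebraMap_X]
    rw [this]
    exact RatFunc.algebraMap_ne_zero (Polynomial.X_sub_C_ne_zero (1 : ℚ))
  have hone : (1 - RatFunc.X : RatFunc ℚ) ^ (2 * n + 1) = -((RatFunc.X - 1) ^ (2 * n + 1)) := by
    rw [show (1 - RatFunc.X : RatFunc ℚ) = -(RatFunc.X - 1) by ring,
      Odd.neg_pow ⟨n, by ring⟩]
  have hpow_ne : ((1 - RatFunc.X : RatFunc ℚ)) ^ (2 * n + 1) ≠ 0 := by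
    rw [hone, neg_ne_zero]
    exact pow_ne_zero _ htX
  rw [div_eq_iff hpow_ne]
  have h1 : toRat ((-1) ^ n * p₀) = (-1) ^ n * toRat p₀ := by
    rw [map_mul, map_pow, map_neg, map_one]
  have h2 : toRat g = (RatFunc.X - 1) ^ (2 * n + 1) * toRat p₀ := by
    rw [hp₀, map_mul, map_pow, map_sub, map_one]
    rw [show toRat Polynomial.X = RatFunc.X by rw [toRat_apply]; simp [RatFunc.algebraMap_X]]
  rw [mul_assoc, hg, h2, h1, hone]
  ring
end

section
/- The type B q-Eulerian coefficients B_{n,k}(q) satisfy the recurrence B_{n,k}(q) = [2k+1]_q B_{n-1,k}(q) + q^{2k-1} [2n-2k+1]_q B_{n-1,k-1}(q) for 1 ≤ k ≤ n. -/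
lemma qint_geo (s : ℕ) : (1 - Polynomial.X) * qint s = 1 - (Polynomial.X : Polynomial ℤ) ^ s := by
  unfold qint
  linear_combination -geom_sum_mul (Polynomial.X : Polynomial ℤ) s
open PowerSeries in
lemma hF_step (m : ℕ) :
    (1 - C (R := Polynomial ℤ) Polynomial.X) * mk (fun j => (qint (2 * j + 1)) ^ (m + 1)) =
      mk (fun j => (qint (2 * j + 1)) ^ m) -
        C (R := Polynomial ℤ) Polynomial.X *
          rescale (Polynomial.X ^ 2) (mk (fun j => (qint (2 * j + 1)) ^ m)) := by
  rw [rescale_mk]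
  ext1 j
  simp only [map_sub, sub_mul, one_mul, coeff_C_mul, coeff_mk]
  linear_combination (qint (2 * j + 1)) ^ m * qint_geo (2 * j + 1) +
    ((1 : Polynomial ℤ) - Polynomial.X) * (pow_succ (qint (2 * j + 1)) m)

lemma rescale_C'_s14 (r a : Polynomial ℤ) :
    PowerSeries.rescale r (PowerSeries.C (R := Polynomial ℤ) a) = PowerSeries.C (R := Polynomial ℤ) a := by
  ext1 n
  simp only [PowerSeries.coeff_rescale, PowerSeries.coeff_C]
  split_ifs with h <;> simp [h]

open PowerSeries in
lemma hP_step (m : ℕ) :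
    (1 - X) * rescale ((Polynomial.X : Polynomial ℤ) ^ 2)
        (∏ i ∈ Finset.range (m + 1), (1 - C (R := Polynomial ℤ) (Polynomial.X ^ (2 * i)) * X)) =
      ∏ i ∈ Finset.range (m + 1 + 1), (1 - C (R := Polynomial ℤ) (Polynomial.X ^ (2 * i)) * X) := by
  rw [map_prod]
  have h1 : ∀ i : ℕ, rescale ((Polynomial.X : Polynomial ℤ) ^ 2)
      (1 - C (R := Polynomial ℤ) (Polynomial.X ^ (2 * i)) * X) =
      1 - C (R := Polynomial ℤ) (Polynomial.X ^ (2 * (i + 1))) * X := by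
    intro i
    rw [map_sub, map_one, map_mul, rescale_C'_s14, rescale_X, ← mul_assoc, ← map_mul]
    congr 2
    ring_nf
  rw [Finset.prod_congr rfl (fun i _ => h1 i),
    Finset.prod_range_succ' (fun i => 1 - C (R := Polynomial ℤ) (Polynomial.X ^ (2 * i)) * X) (m + 1)]
  simp [mul_comm]

open PowerSeries in
lemma key_step (B : ℕ → Polynomial (Polynomial ℤ))
    (hB : ∀ n, ((B n : PowerSeries (Polynomial ℤ)) =
      PowerSeries.mk (fun j => (qint (2 * j + 1)) ^ n) *
        ∏ i ∈ Finset.range (n + 1),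
          (1 - PowerSeries.C (R := Polynomial ℤ) (Polynomial.X ^ (2 * i)) * PowerSeries.X)))
    (m : ℕ) :
    ((B (m + 1) : PowerSeries (Polynomial ℤ))) - C (R := Polynomial ℤ) Polynomial.X * (B (m + 1) : PowerSeries (Polynomial ℤ)) =
      (B m : PowerSeries (Polynomial ℤ))
        - C (R := Polynomial ℤ) (Polynomial.X ^ (2 * (m + 1))) * (X * (B m : PowerSeries (Polynomial ℤ)))
        - C (R := Polynomial ℤ) Polynomial.X * rescale (Polynomial.X ^ 2) (B m : PowerSeries (Polynomial ℤ))
        + C (R := Polynomial ℤ) Polynomial.X * (X * rescale (Polynomial.X ^ 2) (B m : PowerSeries (Polynomial ℤ))) := by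
  have e1 := hF_step m
  have e2 := Finset.prod_range_succ
    (fun i => 1 - C (R := Polynomial ℤ) (Polynomial.X ^ (2 * i)) * X) (m + 1)
  have e3 := hP_step m
  rw [hB (m + 1), hB m]
  have e4 := map_mul (rescale ((Polynomial.X : Polynomial ℤ) ^ 2))
    (mk (fun j => (qint (2 * j + 1)) ^ m))
    (∏ i ∈ Finset.range (m + 1), (1 - C (R := Polynomial ℤ) (Polynomial.X ^ (2 * i)) * X))
  linear_combination
    (∏ i ∈ Finset.range (m + 1 + 1), (1 - C (R := Polynomial ℤ) (Polynomial.X ^ (2 * i)) * X)) * e1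
    + (mk (fun j => (qint (2 * j + 1)) ^ m)) * e2
    + C (R := Polynomial ℤ) Polynomial.X
        * rescale ((Polynomial.X : Polynomial ℤ) ^ 2) (mk (fun j => (qint (2 * j + 1)) ^ m)) * e3
    + C (R := Polynomial ℤ) Polynomial.X * (1 - X) * e4

/-- Chow–Gessel's type B q-Eulerian coefficients `B_{n,k}(q)`, where
`B_n(t,q) = ∑_{k=0}^n B_{n,k}(q) t^k` is defined by
`∑_{j≥0} [2j+1]_q^n t^j = B_n(t,q)/(t;q²)_{n+1}`, satisfy
`B_{n,k}(q) = [2k+1]_q B_{n-1,k}(q) + q^{2k-1} [2n-2k+1]_q B_{n-1,k-1}(q)` for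
`1 ≤ k ≤ n`. -/
theorem chowGessel_qEulerianB_recurrence
    (B : ℕ → Polynomial (Polynomial ℤ))
    (hB : ∀ n, ((B n : PowerSeries (Polynomial ℤ)) =
      PowerSeries.mk (fun j => (qint (2 * j + 1)) ^ n) *
        ∏ i ∈ Finset.range (n + 1),
          (1 - PowerSeries.C (R := Polynomial ℤ) (Polynomial.X ^ (2 * i)) * PowerSeries.X))) :
    ∀ n k, 1 ≤ k → k ≤ n →
      (B n).coeff k = qint (2 * k + 1) * (B (n - 1)).coeff k +
        Polynomial.X ^ (2 * k - 1) * qint (2 * n - 2 * k + 1) * (B (n - 1)).coeff (k - 1) := by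
  intro n k hk1 hkn
  obtain ⟨k, rfl⟩ : ∃ k', k = k' + 1 := ⟨k - 1, by omega⟩
  obtain ⟨d, rfl⟩ : ∃ d, n = (k + 1) + d := ⟨n - (k + 1), by omega⟩
  rw [show k + 1 + d = (k + d) + 1 from by omega,
    show (k + d) + 1 - 1 = k + d from by omega,
    show (k + 1) - 1 = k from by omega,
    show 2 * (k + 1) - 1 = 2 * k + 1 from by omega,
    show 2 * ((k + d) + 1) - 2 * (k + 1) + 1 = 2 * d + 1 from by omega]
  have hc := congrArg (PowerSeries.coeff (R := Polynomial ℤ) (k + 1)) (key_step B hB (k + d))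
  simp only [map_sub, map_add, PowerSeries.coeff_C_mul, PowerSeries.coeff_succ_X_mul,
    PowerSeries.coeff_rescale, Polynomial.coeff_coe] at hc
  have hne : (1 - Polynomial.X : Polynomial ℤ) ≠ 0 := by
    intro h
    have h1 := congrArg (fun p => Polynomial.coeff p 1) h
    simp [Polynomial.coeff_one] at h1
  apply mul_left_cancel₀ hne
  linear_combination hc - ((B (k + d)).coeff (k + 1)) * qint_geo (2 * (k + 1) + 1) -
    Polynomial.X ^ (2 * k + 1) * ((B (k + d)).coeff k) * qint_geo (2 * d + 1)
end

section
/- For all q and integers n, s, k with 0 ≤ s ≤ k, the identity [n-2s]_{q^2}[2s+1]_q + [n-k-s]_{q^2}(1+q)(1+q^{2s+1})[k-s]_{q^2} = [2k+1]_q [n-k-s]_{q^2} + [2n+1-2k]_q [k-s]_{q^2} holds as an identity of polynomials in q. -/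
set_option maxHeartbeats 1000000 in
private lemma aux_left (x a b c : RatFunc ℚ) (hB : b ≠ 0) (hC : c ≠ 0)
    (h1 : 1 - x ≠ 0) (h2 : 1 - x ^ 2 ≠ 0) :
    (1 - a / b / b) / (1 - x ^ 2) * ((1 - b * x) / (1 - x)) +
      (1 - a / c / b) / (1 - x ^ 2) * (1 + x) * (1 + b * x) * ((1 - c / b) / (1 - x ^ 2)) =
      ((b * b - a) * (1 - b * x) * (c * (1 - x ^ 2)) +
        (b * c - a) * (1 + x) * (1 + b * x) * (b - c) * (1 - x)) /
        (b ^ 2 * c * (1 - x) * (1 - x ^ 2) ^ 2) := by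
  field_simp

set_option maxHeartbeats 1000000 in
private lemma aux_right (x a b c : RatFunc ℚ) (hB : b ≠ 0) (hC : c ≠ 0)
    (h1 : 1 - x ≠ 0) (h2 : 1 - x ^ 2 ≠ 0) :
    (1 - c * x) / (1 - x) * ((1 - a / c / b) / (1 - x ^ 2)) +
      (1 - a / c * x) / (1 - x) * ((1 - c / b) / (1 - x ^ 2)) =
      ((1 - c * x) * (b * c - a) * (b * (1 - x ^ 2)) +
        (c - a * x) * (b - c) * (b * (1 - x ^ 2))) /
        (b ^ 2 * c * (1 - x) * (1 - x ^ 2) ^ 2) := by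
  field_simp

/-- The `q`-integer `[m]_q = (1-q^m)/(1-q)` for an arbitrary integer `m`, as a rational
function of `q` (for `m ≥ 0` this is the polynomial `1 + q + ⋯ + q^{m-1}`). -/
noncomputable def qintZ (m : ℤ) : RatFunc ℚ := (1 - RatFunc.X ^ m) / (1 - RatFunc.X)

/-- The `q²`-integer `[m]_{q²} = (1-q^{2m})/(1-q²)` for an arbitrary integer `m`. -/
noncomputable def qintZ2 (m : ℤ) : RatFunc ℚ :=
  (1 - RatFunc.X ^ (2 * m)) / (1 - RatFunc.X ^ 2)

set_option maxHeartbeats 1000000 in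
/-- For all integers `n, s, k` with `0 ≤ s ≤ k`, the identity
`[n-2s]_{q²}[2s+1]_q + [n-k-s]_{q²}(1+q)(1+q^{2s+1})[k-s]_{q²}
  = [2k+1]_q [n-k-s]_{q²} + [2n+1-2k]_q [k-s]_{q²}`
holds identically in `q`. -/
theorem qint_identity_typeB (n s k : ℤ) (hs : 0 ≤ s) (hsk : s ≤ k) :
    qintZ2 (n - 2 * s) * qintZ (2 * s + 1) +
      qintZ2 (n - k - s) * (1 + RatFunc.X) * (1 + RatFunc.X ^ (2 * s + 1)) * qintZ2 (k - s) =
    qintZ (2 * k + 1) * qintZ2 (n - k - s) + qintZ (2 * n + 1 - 2 * k) * qintZ2 (k - s) := by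
  have hX : (RatFunc.X : RatFunc ℚ) ≠ 0 := RatFunc.X_ne_zero
  have hinj : Function.Injective (algebraMap (Polynomial ℚ) (RatFunc ℚ)) :=
    RatFunc.algebraMap_injective ℚ
  have hXne1 : (RatFunc.X : RatFunc ℚ) ≠ 1 := by
    intro h
    have := hinj (a₁ := Polynomial.X) (a₂ := 1) (by simpa [RatFunc.algebraMap_X] using h)
    simpa using congrArg Polynomial.natDegree this
  have h1 : (1 - RatFunc.X : RatFunc ℚ) ≠ 0 := sub_ne_zero.mpr (Ne.symm hXne1)
  have hXnem1 : (RatFunc.X : RatFunc ℚ) ≠ -1 := by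
    intro h
    have := hinj (a₁ := Polynomial.X) (a₂ := -1) (by simpa [RatFunc.algebraMap_X] using h)
    simpa using congrArg Polynomial.natDegree this
  have h1' : (1 + RatFunc.X : RatFunc ℚ) ≠ 0 := by
    intro h; exact hXnem1 (by linear_combination h)
  have h2 : (1 - RatFunc.X ^ 2 : RatFunc ℚ) ≠ 0 := by
    have e : (1 - RatFunc.X ^ 2 : RatFunc ℚ) = (1 - RatFunc.X) * (1 + RatFunc.X) := by ring
    rw [e]; exact mul_ne_zero h1 h1'
  have hB : (RatFunc.X : RatFunc ℚ) ^ (2 * s) ≠ 0 := zpow_ne_zero _ hX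
  have hC : (RatFunc.X : RatFunc ℚ) ^ (2 * k) ≠ 0 := zpow_ne_zero _ hX
  simp only [qintZ, qintZ2]
  rw [show 2 * (n - 2 * s) = 2 * n - 2 * s - 2 * s from by ring,
      show 2 * (n - k - s) = 2 * n - 2 * k - 2 * s from by ring,
      show 2 * (k - s) = 2 * k - 2 * s from by ring,
      show (2 * n + 1 - 2 * k : ℤ) = 2 * n - 2 * k + 1 from by ring]
  simp only [zpow_sub₀ hX, zpow_add₀ hX, zpow_one]
  rw [aux_left RatFunc.X (RatFunc.X ^ (2 * n)) (RatFunc.X ^ (2 * s)) (RatFunc.X ^ (2 * k))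
        hB hC h1 h2,
      aux_right RatFunc.X (RatFunc.X ^ (2 * n)) (RatFunc.X ^ (2 * s)) (RatFunc.X ^ (2 * k))
        hB hC h1 h2]
  congr 1
  ring
end

section
/- For n ≥ 1, B_n(t,q)/(t;q^2)_{n+1} = (1-q)^{-n} sum_{k=0}^{n} binom(n,k) (-q)^k / (1 - t q^{2k}) as rational functions, and consequently the q-secant number E*_{2n}(q) := (-1)^n q^{n(n+1)} B_{2n}(-q^{-2n-1}, q) equals (-1)^n q^{n(n+1)} (-q^{-2n-1};q^2)_{2n+1} (1-q)^{-2n} sum_{k=0}^{2n} binom(2n,k) (-q)^k/(1+q^{2k-2n-1}). -/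
/-- The inclusion of `(ℤ[q])[t]` into the two-variable rational function field
`ℚ(q)(t)`, sending `t` to the outer variable `X` and `q` to `C X`. -/
noncomputable def toRat2 : Polynomial (Polynomial ℤ) →+* RatFunc (RatFunc ℚ) :=
  Polynomial.eval₂RingHom ((RatFunc.C : RatFunc ℚ →+* RatFunc (RatFunc ℚ)).comp toRat) RatFunc.X

open Polynomial PowerSeries Finset in
private lemma geom_inv {R : Type*} [CommRing R] (c : R) :
    (PowerSeries.mk fun j => c ^ j) * (1 - PowerSeries.C (R := R) c * PowerSeries.X) = 1 := by
  ext n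
  cases n with
  | zero => simp
  | succ m =>
    rw [mul_sub, mul_one, map_sub, ← mul_assoc, PowerSeries.coeff_succ_mul_X]
    simp [PowerSeries.coeff_mul_C, pow_succ, mul_comm]

private lemma coePS_sum {R : Type*} [CommRing R] {ι : Type*} (s : Finset ι) (f : ι → Polynomial R) :
    ((∑ i ∈ s, f i : Polynomial R) : PowerSeries R) = ∑ i ∈ s, ((f i : PowerSeries R)) :=
  map_sum (Polynomial.coeToPowerSeries.ringHom) f s

private lemma coePS_prod {R : Type*} [CommRing R] {ι : Type*} (s : Finset ι) (f : ι → Polynomial R) :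
    ((∏ i ∈ s, f i : Polynomial R) : PowerSeries R) = ∏ i ∈ s, ((f i : PowerSeries R)) :=
  map_prod (Polynomial.coeToPowerSeries.ringHom) f s

open Polynomial PowerSeries Finset in
private lemma key_s18 {R : Type*} [CommRing R] (n : ℕ) (c : R) (P : Polynomial R)
    (hP : (P : PowerSeries R) =
      PowerSeries.mk (fun j => (∑ i ∈ Finset.range (2 * j + 1), c ^ i) ^ n) *
        ∏ i ∈ Finset.range (n + 1), (1 - PowerSeries.C (R := R) (c ^ (2 * i)) * PowerSeries.X)) :
    P * Polynomial.C ((1 - c) ^ n) =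
      ∑ k ∈ Finset.range (n + 1), Polynomial.C ((n.choose k : R) * (-c) ^ k) *
        ∏ i ∈ (Finset.range (n + 1)).erase k,
          (1 - Polynomial.C (c ^ (2 * i)) * Polynomial.X) := by
  classical
  rw [← Polynomial.coe_inj, Polynomial.coe_mul, Polynomial.coe_C, hP]
  have hcoeRHS : ((∑ k ∈ Finset.range (n + 1), Polynomial.C ((n.choose k : R) * (-c) ^ k) *
        ∏ i ∈ (Finset.range (n + 1)).erase k,
          (1 - Polynomial.C (c ^ (2 * i)) * Polynomial.X) : Polynomial R) : PowerSeries R) =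
      ∑ k ∈ Finset.range (n + 1), PowerSeries.C (R := R) ((n.choose k : R) * (-c) ^ k) *
        ∏ i ∈ (Finset.range (n + 1)).erase k,
          (1 - PowerSeries.C (R := R) (c ^ (2 * i)) * PowerSeries.X) := by
    rw [coePS_sum]
    refine Finset.sum_congr rfl fun k _ => ?_
    rw [Polynomial.coe_mul, Polynomial.coe_C, coePS_prod]
    congr 1
    refine Finset.prod_congr rfl fun i _ => ?_
    show ((1 - Polynomial.C (c ^ (2 * i)) * Polynomial.X : Polynomial R) : PowerSeries R) = _
    rw [Polynomial.coe_sub, Polynomial.coe_one, Polynomial.coe_mul, Polynomial.coe_C,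
      Polynomial.coe_X]
  rw [hcoeRHS]
  have step1 : (PowerSeries.mk (fun j => (∑ i ∈ Finset.range (2 * j + 1), c ^ i) ^ n) : PowerSeries R) *
      PowerSeries.C (R := R) ((1 - c) ^ n) =
      ∑ k ∈ Finset.range (n + 1),
        PowerSeries.C (R := R) ((n.choose k : R) * (-c) ^ k) *
          PowerSeries.mk (fun j => (c ^ (2 * k)) ^ j) := by
    ext j
    rw [PowerSeries.coeff_mul_C, PowerSeries.coeff_mk, map_sum]
    simp only [PowerSeries.coeff_C_mul, PowerSeries.coeff_mk]
    rw [← mul_pow]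
    have hg : (∑ i ∈ Finset.range (2 * j + 1), c ^ i) * (1 - c) = 1 - c ^ (2 * j + 1) := by
      have h := geom_sum_mul c (2 * j + 1)
      linear_combination -h
    rw [hg, show (1 : R) - c ^ (2 * j + 1) = -(c ^ (2 * j + 1)) + 1 by ring, add_pow]
    refine Finset.sum_congr rfl fun k _ => ?_
    ring
  rw [mul_right_comm, step1, Finset.sum_mul]
  refine Finset.sum_congr rfl fun k hk => ?_
  rw [← Finset.mul_prod_erase (Finset.range (n + 1))
    (fun i => 1 - PowerSeries.C (R := R) (c ^ (2 * i)) * PowerSeries.X) hk]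
  have h := geom_inv (c ^ (2 * k))
  linear_combination (PowerSeries.C (R := R) ((n.choose k : R) * (-c) ^ k) *
    ∏ i ∈ (Finset.range (n + 1)).erase k,
      (1 - PowerSeries.C (R := R) (c ^ (2 * i)) * PowerSeries.X)) * h

private lemma htX : toRat Polynomial.X = RatFunc.X := by
  simp [toRat, RatFunc.algebraMap_X]

private lemma htqint (m : ℕ) : toRat (qint m) = ∑ i ∈ Finset.range m, RatFunc.X ^ i := by
  simp [qint, map_sum, map_pow, htX]

private lemma hAlg : (algebraMap (Polynomial (RatFunc ℚ)) (RatFunc (RatFunc ℚ))) =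
    Polynomial.eval₂RingHom (RatFunc.C : RatFunc ℚ →+* RatFunc (RatFunc ℚ)) RatFunc.X := by
  apply Polynomial.ringHom_ext
  · intro a; simp [RatFunc.algebraMap_C]
  · simp [RatFunc.algebraMap_X]

private lemma ht2 (p : Polynomial (Polynomial ℤ)) :
    toRat2 p = algebraMap (Polynomial (RatFunc ℚ)) (RatFunc (RatFunc ℚ)) (p.map toRat) := by
  rw [hAlg, Polynomial.coe_eval₂RingHom, Polynomial.eval₂_map]
  rfl

private lemma hBK (B : ℕ → Polynomial (Polynomial ℤ))
    (hB : ∀ n, ((B n : PowerSeries (Polynomial ℤ)) =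
      PowerSeries.mk (fun j => (qint (2 * j + 1)) ^ n) *
        ∏ i ∈ Finset.range (n + 1),
          (1 - PowerSeries.C (R := Polynomial ℤ) (Polynomial.X ^ (2 * i)) * PowerSeries.X)))
    (n : ℕ) :
    (((B n).map toRat : Polynomial (RatFunc ℚ)) : PowerSeries (RatFunc ℚ)) =
      PowerSeries.mk (fun j => (∑ i ∈ Finset.range (2 * j + 1), (RatFunc.X : RatFunc ℚ) ^ i) ^ n) *
        ∏ i ∈ Finset.range (n + 1),
          (1 - PowerSeries.C (R := RatFunc ℚ) ((RatFunc.X : RatFunc ℚ) ^ (2 * i)) * PowerSeries.X) := by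
  have h := congrArg (PowerSeries.map toRat) (hB n)
  rw [map_mul, map_prod] at h
  have hcoe : PowerSeries.map toRat ((B n : PowerSeries (Polynomial ℤ))) =
      (((B n).map toRat : Polynomial (RatFunc ℚ)) : PowerSeries (RatFunc ℚ)) := by
    ext j
    simp [PowerSeries.coeff_map, Polynomial.coeff_coe, Polynomial.coeff_map]
  have hmk : PowerSeries.map toRat (PowerSeries.mk fun j => (qint (2 * j + 1)) ^ n) =
      PowerSeries.mk fun j => (∑ i ∈ Finset.range (2 * j + 1), (RatFunc.X : RatFunc ℚ) ^ i) ^ n := by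
    ext j
    simp [PowerSeries.coeff_map, PowerSeries.coeff_mk, map_pow, htqint]
  rw [hcoe, hmk] at h
  rw [h]
  congr 1
  refine Finset.prod_congr rfl fun i _ => ?_
  rw [map_sub, map_one, map_mul, PowerSeries.map_C, PowerSeries.map_X, map_pow, htX]

private lemma hFne (a : RatFunc ℚ) :
    (1 - RatFunc.C a * RatFunc.X : RatFunc (RatFunc ℚ)) ≠ 0 := by
  have hp : (1 - Polynomial.C a * Polynomial.X : Polynomial (RatFunc ℚ)) ≠ 0 := by
    intro h
    have := congrArg (fun p => Polynomial.coeff p 0) h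
    simp at this
  have h2 := RatFunc.algebraMap_ne_zero hp
  rwa [map_sub, map_one, map_mul, RatFunc.algebraMap_C, RatFunc.algebraMap_X] at h2

private lemma h1mX : (1 - RatFunc.X : RatFunc ℚ) ≠ 0 := by
  have hp : ((1 : Polynomial ℚ) - Polynomial.X) ≠ 0 := by
    intro h
    have := congrArg (fun p => Polynomial.coeff p 1) h
    simp [Polynomial.coeff_one] at this
  have h2 := RatFunc.algebraMap_ne_zero hp
  rwa [map_sub, map_one, RatFunc.algebraMap_X] at h2

private lemma hCne : (1 - RatFunc.C (RatFunc.X : RatFunc ℚ) : RatFunc (RatFunc ℚ)) ≠ 0 := by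
  have hp : (Polynomial.C (1 - RatFunc.X : RatFunc ℚ) : Polynomial (RatFunc ℚ)) ≠ 0 :=
    Polynomial.C_ne_zero.mpr h1mX
  have h2 := RatFunc.algebraMap_ne_zero hp
  rwa [RatFunc.algebraMap_C, map_sub, map_one] at h2

private lemma hone_add_zpow (e : ℤ) (he : e ≠ 0) :
    (1 + RatFunc.X ^ e : RatFunc ℚ) ≠ 0 := by
  intro h
  have hx : (RatFunc.X : RatFunc ℚ) ^ e = -1 := by linear_combination h
  have key_s18 : ∀ m : ℕ, m ≠ 0 → (RatFunc.X : RatFunc ℚ) ^ (m : ℕ) ≠ -1 := by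
    intro m hm hEq
    have h4 : (algebraMap (Polynomial ℚ) (RatFunc ℚ)) (Polynomial.X ^ m) =
        algebraMap (Polynomial ℚ) (RatFunc ℚ) (-1) := by
      rw [map_pow, RatFunc.algebraMap_X, map_neg, map_one, hEq]
    have h3 := RatFunc.algebraMap_injective ℚ h4
    have h5 := congrArg (fun p => Polynomial.coeff p 0) h3
    simp only [Polynomial.coeff_X_pow] at h5
    rw [if_neg (by omega : ¬ 0 = m)] at h5
    exact absurd h5 (by norm_num)
  rcases lt_or_gt_of_ne he with hneg | hpos
  · have hme : e = -((e.natAbs : ℕ) : ℤ) := by omega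
    rw [hme, zpow_neg, zpow_natCast, inv_eq_iff_eq_inv] at hx
    simp only [inv_neg, inv_one] at hx
    exact key_s18 _ (by omega) hx
  · have hme : e = ((e.toNat : ℕ) : ℤ) := by omega
    rw [hme, zpow_natCast] at hx
    exact key_s18 _ (by omega) hx

private lemma E1 (B : ℕ → Polynomial (Polynomial ℤ))
    (hB : ∀ n, ((B n : PowerSeries (Polynomial ℤ)) =
      PowerSeries.mk (fun j => (qint (2 * j + 1)) ^ n) *
        ∏ i ∈ Finset.range (n + 1),
          (1 - PowerSeries.C (R := Polynomial ℤ) (Polynomial.X ^ (2 * i)) * PowerSeries.X)))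
    (n : ℕ) :
    toRat2 (B n) * (1 - RatFunc.C (RatFunc.X : RatFunc ℚ)) ^ n =
      ∑ k ∈ Finset.range (n + 1),
        (n.choose k : RatFunc (RatFunc ℚ)) * (-(RatFunc.C (RatFunc.X : RatFunc ℚ))) ^ k *
          ∏ i ∈ (Finset.range (n + 1)).erase k,
            (1 - RatFunc.C ((RatFunc.X : RatFunc ℚ) ^ (2 * i)) * RatFunc.X) := by
  have hk := key_s18 n (RatFunc.X : RatFunc ℚ) ((B n).map toRat) (hBK B hB n)
  have h := congrArg (algebraMap (Polynomial (RatFunc ℚ)) (RatFunc (RatFunc ℚ))) hk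
  simp only [map_mul, map_sum, map_prod, map_sub, map_one, map_pow, map_neg, map_natCast,
    RatFunc.algebraMap_C, RatFunc.algebraMap_X] at h
  rw [ht2]
  simp only [map_pow]
  exact h

/-- For `n ≥ 1`, as rational functions,
`B_n(t,q)/(t;q²)_{n+1} = (1-q)^{-n} ∑_{k=0}^n binom(n,k)(-q)^k/(1-tq^{2k})`, and
consequently the q-secant number `E*_{2n}(q) := (-1)^n q^{n(n+1)} B_{2n}(-q^{-2n-1},q)`
equals `(-1)^n q^{n(n+1)} (-q^{-2n-1};q²)_{2n+1} (1-q)^{-2n}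
∑_{k=0}^{2n} binom(2n,k)(-q)^k/(1+q^{2k-2n-1})`. Here `B_n(t,q)` is Chow–Gessel's
type B q-Eulerian polynomial, defined by `∑_{j≥0} [2j+1]_q^n t^j = B_n(t,q)/(t;q²)_{n+1}`. -/
theorem chowGessel_partial_fractions
    (B : ℕ → Polynomial (Polynomial ℤ))
    (hB : ∀ n, ((B n : PowerSeries (Polynomial ℤ)) =
      PowerSeries.mk (fun j => (qint (2 * j + 1)) ^ n) *
        ∏ i ∈ Finset.range (n + 1),
          (1 - PowerSeries.C (R := Polynomial ℤ) (Polynomial.X ^ (2 * i)) * PowerSeries.X))) :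
    (∀ n : ℕ, 1 ≤ n →
      toRat2 (B n) /
          ∏ i ∈ Finset.range (n + 1),
            (1 - RatFunc.C ((RatFunc.X : RatFunc ℚ) ^ (2 * i)) * RatFunc.X) =
        (∑ k ∈ Finset.range (n + 1),
          (n.choose k : RatFunc (RatFunc ℚ)) * (-(RatFunc.C (RatFunc.X : RatFunc ℚ))) ^ k /
            (1 - RatFunc.C ((RatFunc.X : RatFunc ℚ) ^ (2 * k)) * RatFunc.X)) /
          (1 - RatFunc.C (RatFunc.X : RatFunc ℚ)) ^ n) ∧
    (∀ n : ℕ, 1 ≤ n →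
      (-1 : RatFunc ℚ) ^ n * RatFunc.X ^ (n * (n + 1)) *
          Polynomial.eval₂ toRat (-(RatFunc.X ^ (-(2 * (n : ℤ) + 1)))) (B (2 * n)) =
        (-1 : RatFunc ℚ) ^ n * RatFunc.X ^ (n * (n + 1)) *
          (∏ i ∈ Finset.range (2 * n + 1), (1 + RatFunc.X ^ (2 * (i : ℤ) - 2 * n - 1))) *
          (∑ k ∈ Finset.range (2 * n + 1),
            ((2 * n).choose k : RatFunc ℚ) * (-RatFunc.X) ^ k /
              (1 + RatFunc.X ^ (2 * (k : ℤ) - 2 * n - 1))) /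
          (1 - RatFunc.X) ^ (2 * n)) := by
  constructor
  · intro n _
    have hprodne : (∏ i ∈ Finset.range (n + 1),
        (1 - RatFunc.C ((RatFunc.X : RatFunc ℚ) ^ (2 * i)) * RatFunc.X)) ≠ 0 :=
      Finset.prod_ne_zero_iff.mpr fun i _ => hFne _
    rw [div_eq_div_iff hprodne (pow_ne_zero _ hCne), E1 B hB n, Finset.sum_mul]
    refine Finset.sum_congr rfl fun k hk => ?_
    rw [← Finset.mul_prod_erase (Finset.range (n + 1))
      (fun i => 1 - RatFunc.C ((RatFunc.X : RatFunc ℚ) ^ (2 * i)) * RatFunc.X) hk]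
    have hne := hFne ((RatFunc.X : RatFunc ℚ) ^ (2 * k))
    have hgen : ∀ c F P : RatFunc (RatFunc ℚ), F ≠ 0 → c * P = c / F * (F * P) := by
      intro c F P hF
      field_simp
    exact hgen _ _ _ hne
  · intro n _
    have hk := key_s18 (2 * n) (RatFunc.X : RatFunc ℚ) ((B (2 * n)).map toRat) (hBK B hB (2 * n))
    have h := congrArg (Polynomial.eval (-((RatFunc.X : RatFunc ℚ) ^ (-(2 * (n : ℤ) + 1))))) hk
    simp only [Polynomial.eval_mul, Polynomial.eval_C, Polynomial.eval_finset_sum,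
      Polynomial.eval_prod, Polynomial.eval_sub, Polynomial.eval_one, Polynomial.eval_X] at h
    rw [← Polynomial.eval₂_eq_eval_map] at h
    have hfac : ∀ i : ℕ, (1 : RatFunc ℚ) -
        (RatFunc.X : RatFunc ℚ) ^ (2 * i) * (-((RatFunc.X : RatFunc ℚ) ^ (-(2 * (n : ℤ) + 1)))) =
        1 + RatFunc.X ^ (2 * (i : ℤ) - 2 * n - 1) := by
      intro i
      rw [mul_neg, sub_neg_eq_add, ← zpow_natCast (RatFunc.X : RatFunc ℚ) (2 * i),
        ← zpow_add₀ (RatFunc.X_ne_zero (K := ℚ))]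
      congr 1
      push_cast
      ring
    simp only [hfac] at h
    have hPS : (∏ i ∈ Finset.range (2 * n + 1), (1 + (RatFunc.X : RatFunc ℚ) ^ (2 * (i : ℤ) - 2 * n - 1))) *
        (∑ k ∈ Finset.range (2 * n + 1),
          ((2 * n).choose k : RatFunc ℚ) * (-RatFunc.X) ^ k /
            (1 + RatFunc.X ^ (2 * (k : ℤ) - 2 * n - 1))) =
        ∑ k ∈ Finset.range (2 * n + 1),
          ((2 * n).choose k : RatFunc ℚ) * (-RatFunc.X) ^ k *
            ∏ i ∈ (Finset.range (2 * n + 1)).erase k,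
              (1 + (RatFunc.X : RatFunc ℚ) ^ (2 * (i : ℤ) - 2 * n - 1)) := by
      rw [Finset.mul_sum]
      refine Finset.sum_congr rfl fun k hk2 => ?_
      rw [← Finset.mul_prod_erase (Finset.range (2 * n + 1))
        (fun i => 1 + (RatFunc.X : RatFunc ℚ) ^ (2 * (i : ℤ) - 2 * n - 1)) hk2]
      have hne := hone_add_zpow (2 * (k : ℤ) - 2 * n - 1) (by omega)
      have hgen : ∀ c F P : RatFunc ℚ, F ≠ 0 → (F * P) * (c / F) = c * P := by
        intro c F P hF
        field_simp
      exact hgen _ _ _ hne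
    have hE : Polynomial.eval₂ toRat (-((RatFunc.X : RatFunc ℚ) ^ (-(2 * (n : ℤ) + 1)))) (B (2 * n)) =
        (∏ i ∈ Finset.range (2 * n + 1), (1 + (RatFunc.X : RatFunc ℚ) ^ (2 * (i : ℤ) - 2 * n - 1))) *
        (∑ k ∈ Finset.range (2 * n + 1),
          ((2 * n).choose k : RatFunc ℚ) * (-RatFunc.X) ^ k /
            (1 + RatFunc.X ^ (2 * (k : ℤ) - 2 * n - 1))) / (1 - RatFunc.X) ^ (2 * n) := by
      rw [eq_div_iff (pow_ne_zero _ h1mX), hPS]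
      exact h
    rw [hE]
    ring
end
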